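/- arXiv:2109.10328 — 9 statements merged into one kernel-verified Lean document; each statement's English description precedes it below -/
import Mathlib

section
/- Let V ⊂ ℙ^n be a variety, P ∈ ℙ^n a point with all coordinates nonzero, and f_1,...,f_s homogeneous generators of the ideal I(V). Then the Hadamard transforms f_1^{⋆P}, ..., f_s^{⋆P} generate the ideal I(P ⋆ V). -/
open MvPolynomial

/-- The Hadamard transformation of a polynomial by a point `P` with nonzero coordinates:
each coefficient `α_I` is replaced by `α_I / P^I`. -/
noncomputable def hadamardTransform (n : ℕ) (P : Fin (n + 1) → ℂ)
    (f : MvPolynomial (Fin (n + 1)) ℂ) : MvPolynomial (Fin (n + 1)) ℂ :=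
  ∑ d ∈ f.support, monomial d (f.coeff d / ∏ i, P i ^ d i)

/-- The homogeneous vanishing ideal of a subset of ℙ^n(ℂ). -/
noncomputable def vanishingIdeal (n : ℕ) (S : Set (Projectivization ℂ (Fin (n + 1) → ℂ))) :
    Ideal (MvPolynomial (Fin (n + 1)) ℂ) where
  carrier := {f | ∀ (v : Fin (n + 1) → ℂ) (hv : v ≠ 0),
    Projectivization.mk ℂ v hv ∈ S → MvPolynomial.eval v f = 0}
  add_mem' := by
    intro a b ha hb v hv hS
    simp [map_add, ha v hv hS, hb v hv hS]
  zero_mem' := by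
    intro v hv hS
    simp
  smul_mem' := by
    intro c f hf v hv hS
    simp [smul_eq_mul, map_mul, hf v hv hS]

/-- The Hadamard product `P ⋆ V` of a point with all nonzero coordinates and a subset of ℙ^n. -/
def hadamardImage (n : ℕ) (P : Fin (n + 1) → ℂ)
    (V : Set (Projectivization ℂ (Fin (n + 1) → ℂ))) :
    Set (Projectivization ℂ (Fin (n + 1) → ℂ)) :=
  {z | ∃ (v : Fin (n + 1) → ℂ) (hv : v ≠ 0), Projectivization.mk ℂ v hv ∈ V ∧
    ∃ h : (fun i => P i * v i) ≠ 0, z = Projectivization.mk ℂ (fun i => P i * v i) h}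

/-- A projective variety: the common zero locus in ℙ^n of a set of homogeneous polynomials. -/
def IsProjVariety (n : ℕ) (V : Set (Projectivization ℂ (Fin (n + 1) → ℂ))) : Prop :=
  ∃ T : Set (MvPolynomial (Fin (n + 1)) ℂ),
    (∀ f ∈ T, ∃ d, f.IsHomogeneous d) ∧
    V = {x | ∀ f ∈ T, ∀ (v : Fin (n + 1) → ℂ) (hv : v ≠ 0),
      Projectivization.mk ℂ v hv = x → MvPolynomial.eval v f = 0}


theorem eval_aeval_aux (n : ℕ) (w : Fin (n+1) → ℂ) (u : Fin (n+1) → MvPolynomial (Fin (n+1)) ℂ)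
    (g : MvPolynomial (Fin (n+1)) ℂ) :
    eval w (aeval u g) = eval (fun i => eval w (u i)) g := by
  induction g using MvPolynomial.induction_on with
  | C a => simp
  | add p q hp hq => simp only [map_add, hp, hq]
  | mul_X p i hp => simp only [map_mul, hp, aeval_X, eval_mul, eval_X]

theorem hadamardTransform_eq_aeval (n : ℕ) (P : Fin (n+1) → ℂ)
    (g : MvPolynomial (Fin (n+1)) ℂ) :
    hadamardTransform n P g = aeval (fun i => C (P i)⁻¹ * X i) g := by
  conv_rhs => rw [g.as_sum]
  rw [map_sum]
  refine Finset.sum_congr rfl fun d _ => ?_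
  rw [aeval_monomial, monomial_eq, Finsupp.prod_pow, Finsupp.prod_pow, algebraMap_eq]
  have h1 : g.coeff d / (∏ i, P i ^ d i) = g.coeff d * ∏ i, ((P i)⁻¹) ^ d i := by
    rw [div_eq_mul_inv, ← Finset.prod_inv_distrib]
    simp [inv_pow]
  rw [h1]
  simp only [mul_pow, Finset.prod_mul_distrib, ← C_pow, ← map_prod]
  rw [map_mul, mul_assoc]

noncomputable def hadEquiv (n : ℕ) (P : Fin (n+1) → ℂ) (hP : ∀ i, P i ≠ 0) :
    MvPolynomial (Fin (n+1)) ℂ ≃ₐ[ℂ] MvPolynomial (Fin (n+1)) ℂ :=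
  AlgEquiv.ofAlgHom (aeval fun i => C (P i)⁻¹ * X i) (aeval fun i => C (P i) * X i)
    (by
      apply algHom_ext; intro i
      simp only [AlgHom.coe_comp, Function.comp_apply, aeval_X, map_mul, aeval_C,
        algebraMap_eq, AlgHom.coe_id, id_eq]
      rw [← mul_assoc, ← C_mul, mul_inv_cancel₀ (hP i), C_1, one_mul])
    (by
      apply algHom_ext; intro i
      simp only [AlgHom.coe_comp, Function.comp_apply, aeval_X, map_mul, aeval_C,
        algebraMap_eq, AlgHom.coe_id, id_eq]
      rw [← mul_assoc, ← C_mul, inv_mul_cancel₀ (hP i), C_1, one_mul])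

theorem hadamardTransform_generates' (n s : ℕ) (P : Fin (n + 1) → ℂ) (hP : ∀ i, P i ≠ 0)
    (V : Set (Projectivization ℂ (Fin (n + 1) → ℂ)))
    (f : Fin s → MvPolynomial (Fin (n + 1)) ℂ)
    (hgen : vanishingIdeal n V = Ideal.span (Set.range f)) :
    vanishingIdeal n (hadamardImage n P V) =
      Ideal.span (Set.range fun i => hadamardTransform n P (f i)) := by
  classical
  set e := hadEquiv n P hP with hedef
  have hmap : vanishingIdeal n (hadamardImage n P V) =
      Ideal.map (e : MvPolynomial (Fin (n+1)) ℂ →+* MvPolynomial (Fin (n+1)) ℂ)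
        (vanishingIdeal n V) := by
    ext g
    rw [Ideal.mem_map_iff_of_surjective (e : MvPolynomial (Fin (n+1)) ℂ →+* MvPolynomial (Fin (n+1)) ℂ) (fun y => ⟨e.symm y, e.apply_symm_apply y⟩)]
    constructor
    · intro hg
      refine ⟨e.symm g, fun v hv hm => ?_, e.apply_symm_apply g⟩
      have hw : (fun i => P i * v i) ≠ 0 := by
        intro h
        apply hv
        funext i
        have h0 := congrFun h i
        simpa [hP i] using h0
      have hsymm : (e.symm g : MvPolynomial (Fin (n+1)) ℂ)
          = aeval (fun i => C (P i) * X i) g := rfl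
      have h0 := hg (fun i => P i * v i) hw ⟨v, hv, hm, hw, rfl⟩
      rw [hsymm, eval_aeval_aux]
      simpa using h0
    · rintro ⟨x, hx, rfl⟩
      intro w hw hm
      obtain ⟨v, hv, hvV, h, heq⟩ := hm
      rw [Projectivization.mk_eq_mk_iff'] at heq
      obtain ⟨a, ha⟩ := heq
      have ha0 : a ≠ 0 := by
        rintro rfl; apply hw; rw [← ha]; simp
      have hw' : ∀ i, w i = a * (P i * v i) := fun i => by
        rw [← ha]; simp
      have hN : (fun i => a * v i) ≠ 0 := by
        intro h0
        apply hv; funext i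
        have := congrFun h0 i
        simpa [ha0] using this
      have hmk : Projectivization.mk ℂ (fun i => a * v i) hN = Projectivization.mk ℂ v hv := by
        rw [Projectivization.mk_eq_mk_iff']
        exact ⟨a, by funext i; simp⟩
      have hx0 := hx (fun i => a * v i) hN (by rw [hmk]; exact hvV)
      show eval w (aeval (fun i => C (P i)⁻¹ * X i) x) = 0
      rw [eval_aeval_aux]
      have hfun : (fun i => eval w (C (P i)⁻¹ * X i)) = fun i => a * v i := by
        funext i
        rw [eval_mul, eval_C, eval_X, hw' i]
        field_simp [hP i]
      rw [hfun]
      exact hx0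
  rw [hmap, hgen, Ideal.map_span, ← Set.range_comp]
  refine congrArg Ideal.span (congrArg Set.range (funext fun i => ?_))
  exact (hadamardTransform_eq_aeval n P (f i)).symm

/-- if `f₁, …, f_s` are homogeneous generators of `I(V)`, then their
Hadamard transforms by `P` generate `I(P ⋆ V)`. -/
theorem hadamardTransform_generates (n s : ℕ) (P : Fin (n + 1) → ℂ) (hP : ∀ i, P i ≠ 0)
    (V : Set (Projectivization ℂ (Fin (n + 1) → ℂ))) (hV : IsProjVariety n V)
    (f : Fin s → MvPolynomial (Fin (n + 1)) ℂ) (d : Fin s → ℕ)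
    (hhom : ∀ i, (f i).IsHomogeneous (d i))
    (hgen : vanishingIdeal n V = Ideal.span (Set.range f)) :
    vanishingIdeal n (hadamardImage n P V) =
      Ideal.span (Set.range fun i => hadamardTransform n P (f i)) := by
  exact hadamardTransform_generates' n s P hP V f hgen
end

section
/- Let A_i = [α_i : β_i], i = 0,...,3, be four distinct points of ℙ^1 with all α_i, β_i nonzero, and let L^A ⊂ ℙ^3 be the line defined by α_0x_0+α_1x_1+α_2x_2+α_3x_3 = 0 and β_0x_0+β_1x_1+β_2x_2+β_3x_3 = 0. Then L^A does not meet Δ_1, i.e., every point of L^A has at least three nonzero coordinates. -/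
/-- 2×2 linear system with nonzero determinant has only the trivial solution. -/
lemma two_by_two {a b c d u v : ℂ} (h1 : a * u + b * v = 0) (h2 : c * u + d * v = 0)
    (h : a * d ≠ c * b) : u = 0 ∧ v = 0 := by
  have hD : a * d - c * b ≠ 0 := sub_ne_zero.mpr h
  constructor
  · have : (a * d - c * b) * u = d * (a * u + b * v) - b * (c * u + d * v) := by ring
    rw [h1, h2] at this
    simpa [hD] using (by simpa using this : (a * d - c * b) * u = 0)
  · have : (a * d - c * b) * v = a * (c * u + d * v) - c * (a * u + b * v) := by ring
    rw [h1, h2] at this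
    simpa [hD] using (by simpa using this : (a * d - c * b) * v = 0)

/-- if the four points A_t = [α_t : β_t] of ℙ¹ are distinct with all
coordinates nonzero, then every nonzero solution of the system
Σ α_t x_t = 0, Σ β_t x_t = 0 (i.e. every point of the line L^A ⊂ ℙ³) has at least
three nonzero coordinates (L^A ∩ Δ₁ = ∅). -/
theorem line_avoids_Delta1 (α β : Fin 4 → ℂ)
    (hα : ∀ t, α t ≠ 0) (hβ : ∀ t, β t ≠ 0)
    (hdist : ∀ t s : Fin 4, t ≠ s → α t * β s ≠ α s * β t)
    (x : Fin 4 → ℂ) (hx : x ≠ 0)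
    (h1 : ∑ t, α t * x t = 0) (h2 : ∑ t, β t * x t = 0) :
    ∀ i j : Fin 4, i ≠ j → ¬(x i = 0 ∧ x j = 0) := by
  have hdist' : ∀ t s : Fin 4, t ≠ s → α t * β s ≠ β t * α s := by
    intro t s hts h
    exact hdist t s hts (by linear_combination h)
  rw [Fin.sum_univ_four] at h1 h2
  rintro i j hij ⟨hxi, hxj⟩
  fin_cases i <;> fin_cases j <;>
    simp only [Fin.reduceFinMk, Fin.mk_zero, Fin.mk_one] at hxi hxj <;>
    first
    | exact absurd rfl hij
    | (simp only [hxi, hxj, mul_zero, zero_add, add_zero] at h1 h2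
       obtain ⟨h3, h4⟩ := two_by_two h1 h2 (hdist' _ _ (by decide))
       exact hx (funext fun t => by fin_cases t <;> assumption))
end

section
/- Let A_i = [α_i:β_i], i=0,...,3, be four distinct points of ℙ^1 with nonzero coordinates, and define P_1 = [1+β_0/α_0 : 1+β_1/α_1 : 1+β_2/α_2 : 1+β_3/α_3] and Q_1 = [1+α_0/β_0 : 1+α_1/β_1 : 1+α_2/β_2 : 1+α_3/β_3]. Then the line ℓ^P through [1:1:1:1] and P_1 is different from the line ℓ^Q through [1:1:1:1] and Q_1. -/
/-- The point P₁^A = [1+β₀/α₀ : … : 1+β₃/α₃]. -/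
noncomputable def P1vec (α β : Fin 4 → ℂ) : Fin 4 → ℂ := fun t => 1 + β t / α t

/-- The point Q₁^A = [1+α₀/β₀ : … : 1+α₃/β₃]. -/
noncomputable def Q1vec (α β : Fin 4 → ℂ) : Fin 4 → ℂ := fun t => 1 + α t / β t

/-- for four distinct points A_t = [α_t:β_t] of ℙ¹ with nonzero
coordinates, the line ℓ^P through [1:1:1:1] and P₁ differs from the line ℓ^Q
through [1:1:1:1] and Q₁. -/
theorem lP_ne_lQ (α β : Fin 4 → ℂ)
    (hα : ∀ t, α t ≠ 0) (hβ : ∀ t, β t ≠ 0)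
    (hdist : ∀ t s : Fin 4, t ≠ s → α t * β s ≠ α s * β t) :
    Submodule.span ℂ {(fun _ => 1 : Fin 4 → ℂ), P1vec α β} ≠
      Submodule.span ℂ {(fun _ => 1 : Fin 4 → ℂ), Q1vec α β} := by
  intro h
  have hQ : Q1vec α β ∈ Submodule.span ℂ {(fun _ => 1 : Fin 4 → ℂ), P1vec α β} := by
    rw [h]
    exact Submodule.subset_span (by simp)
  rw [Submodule.mem_span_pair] at hQ
  obtain ⟨a, b, hab⟩ := hQ
  set r : Fin 4 → ℂ := fun t => β t / α t with hr
  have hrne : ∀ t, r t ≠ 0 := fun t => div_ne_zero (hβ t) (hα t)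
  have hrd : ∀ t s : Fin 4, t ≠ s → r t ≠ r s := by
    intro t s hts heq
    rw [hr] at heq
    simp only [div_eq_div_iff (hα t) (hα s)] at heq
    exact hdist t s hts (by linear_combination -heq)
  have e : ∀ t, b * (r t)^2 + (a + b - 1) * (r t) - 1 = 0 := by
    intro t
    have key := congrFun hab t
    simp only [P1vec, Q1vec, Pi.add_apply, Pi.smul_apply, smul_eq_mul] at key
    have hrt : β t / α t = r t := rfl
    have hinv : α t / β t = (r t)⁻¹ := by rw [hr]; field_simp
    rw [hinv, hrt] at key
    field_simp [hrne t] at key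
    linear_combination key
  have h01 := hrd 0 1 (by decide)
  have h02 := hrd 0 2 (by decide)
  have h12 := hrd 1 2 (by decide)
  have hF01 : b * (r 0 + r 1) + (a + b - 1) = 0 := by
    have h2 : (r 0 - r 1) * (b * (r 0 + r 1) + (a + b - 1)) = 0 := by
      linear_combination e 0 - e 1
    exact (mul_eq_zero.mp h2).resolve_left (sub_ne_zero.mpr h01)
  have hF02 : b * (r 0 + r 2) + (a + b - 1) = 0 := by
    have h2 : (r 0 - r 2) * (b * (r 0 + r 2) + (a + b - 1)) = 0 := by
      linear_combination e 0 - e 2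
    exact (mul_eq_zero.mp h2).resolve_left (sub_ne_zero.mpr h02)
  have hb : b = 0 := by
    have h3 : b * (r 1 - r 2) = 0 := by linear_combination hF01 - hF02
    exact (mul_eq_zero.mp h3).resolve_right (sub_ne_zero.mpr h12)
  have : (1 : ℂ) = 0 := by
    linear_combination (-1 : ℂ) * e 0 + r 0 * hF01 - (r 0 * r 1) * hb
  exact one_ne_zero this
end

section
/- Let A_i = [α_i:β_i], i=0,...,3, be four distinct points of ℙ^1 with nonzero coordinates, avoiding the set W. Given i,k ∈ I(a) and j,l ∈ I(b), the equality P_i^A ⋆ Q_j^A = P_k^A ⋆ Q_l^A of points in ℙ^3 holds if and only if i = k and j = l. Consequently Z_{a,b}^A = {P_i^A ⋆ Q_j^A : i ∈ I(a), j ∈ I(b)} has exactly ab elements. -/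
/-- The point P_i^A ⋆ Q_j^A ∈ ℙ³ (affine representative). -/
noncomputable def PQvec (α β : Fin 4 → ℂ) (i j : ℕ) : Fin 4 → ℂ :=
  fun t => ((α t + (i : ℂ) * β t) * ((j : ℂ) * α t + β t)) / (α t * β t)

lemma PQvec_comp_ne (α β : Fin 4 → ℂ) (hα : ∀ t, α t ≠ 0) (hβ : ∀ t, β t ≠ 0)
    (hW : ∀ t, ∀ m : ℕ, 1 ≤ m → β t ≠ -(m : ℂ) * α t ∧ (m : ℂ) * β t ≠ -α t)
    (i j : ℕ) (t : Fin 4) : PQvec α β i j t ≠ 0 := by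
  unfold PQvec
  apply div_ne_zero (mul_ne_zero ?_ ?_) (mul_ne_zero (hα t) (hβ t))
  · rcases Nat.eq_zero_or_pos i with h | h
    · simpa [h] using hα t
    · intro hc
      exact (hW t i h).2 (by linear_combination hc)
  · rcases Nat.eq_zero_or_pos j with h | h
    · simpa [h] using hβ t
    · intro hc
      exact (hW t j h).1 (by linear_combination hc)

lemma PQvec_ne (α β : Fin 4 → ℂ) (hα : ∀ t, α t ≠ 0) (hβ : ∀ t, β t ≠ 0)
    (hW : ∀ t, ∀ m : ℕ, 1 ≤ m → β t ≠ -(m : ℂ) * α t ∧ (m : ℂ) * β t ≠ -α t)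
    (i j : ℕ) : PQvec α β i j ≠ 0 :=
  fun h => PQvec_comp_ne α β hα hβ hW i j 0 (congrFun h 0)

lemma PQ_inj (α β : Fin 4 → ℂ) (hα : ∀ t, α t ≠ 0) (hβ : ∀ t, β t ≠ 0)
    (hdist : ∀ t s : Fin 4, t ≠ s → α t * β s ≠ α s * β t)
    (i j k l : ℕ) (c : ℂ) (hc : c ≠ 0)
    (h : ∀ t, c * PQvec α β k l t = PQvec α β i j t) : i = k ∧ j = l := by
  set x : Fin 4 → ℂ := fun t => α t / β t with hxdef
  have hx : ∀ t s : Fin 4, t ≠ s → x t ≠ x s := by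
    intro t s hts he
    rw [hxdef] at he
    simp only at he
    rw [div_eq_div_iff (hβ t) (hβ s)] at he
    exact hdist t s hts he
  set A : ℂ := (j : ℂ) - c * l with hA
  set B : ℂ := (1 + (i : ℂ) * j) - c * (1 + (k : ℂ) * l) with hB
  set C : ℂ := (i : ℂ) - c * k with hC
  have hq : ∀ t, A * (x t) ^ 2 + B * x t + C = 0 := by
    intro t
    have h1 := h t
    unfold PQvec at h1
    have hne : α t * β t ≠ 0 := mul_ne_zero (hα t) (hβ t)
    rw [← mul_div_assoc, div_eq_div_iff hne hne] at h1
    have h2 := mul_right_cancel₀ hne h1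
    have hb := hβ t
    simp only [hxdef]
    field_simp
    linear_combination -h2
  have d01 : x 0 - x 1 ≠ 0 := sub_ne_zero.mpr (hx 0 1 (by decide))
  have d02 : x 0 - x 2 ≠ 0 := sub_ne_zero.mpr (hx 0 2 (by decide))
  have d12 : x 1 - x 2 ≠ 0 := sub_ne_zero.mpr (hx 1 2 (by decide))
  have e01 : A * (x 0 + x 1) + B = 0 := by
    apply mul_left_cancel₀ d01
    linear_combination hq 0 - hq 1
  have e02 : A * (x 0 + x 2) + B = 0 := by
    apply mul_left_cancel₀ d02
    linear_combination hq 0 - hq 2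
  have hA0 : A = 0 := by
    apply mul_left_cancel₀ d12
    linear_combination e01 - e02
  have hB0 : B = 0 := by linear_combination e01 - (x 0 + x 1) * hA0
  have hC0 : C = 0 := by linear_combination hq 0 - x 0 ^ 2 * hA0 - x 0 * hB0
  have hA' : (j : ℂ) = c * l := by linear_combination hA0
  have hB' : (1 : ℂ) + (i : ℂ) * j = c * (1 + (k : ℂ) * l) := by linear_combination hB0
  have hC' : (i : ℂ) = c * k := by linear_combination hC0
  have hfac : (1 - c) * (1 - c * k * l) = 0 := by
    linear_combination hB' - (j : ℂ) * hC' - c * (k : ℂ) * hA'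
  rcases mul_eq_zero.mp hfac with h1 | h1
  · have hc1 : c = 1 := by linear_combination -h1
    subst hc1
    constructor
    · exact_mod_cast hC'.trans (one_mul _)
    · exact_mod_cast hA'.trans (one_mul _)
  · have hil : (i : ℂ) * l = 1 := by linear_combination (l : ℂ) * hC' - h1
    have hjk : (j : ℂ) * k = 1 := by linear_combination (k : ℂ) * hA' - h1
    have hil' : i * l = 1 := by exact_mod_cast hil
    have hjk' : j * k = 1 := by exact_mod_cast hjk
    have hi1 := Nat.eq_one_of_mul_eq_one_right hil'
    have hl1 := Nat.eq_one_of_mul_eq_one_left hil'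
    have hj1 := Nat.eq_one_of_mul_eq_one_right hjk'
    have hk1 := Nat.eq_one_of_mul_eq_one_left hjk'
    exact ⟨hi1.trans hk1.symm, hj1.trans hl1.symm⟩

set_option maxHeartbeats 1600000 in
theorem PQ_injective_card (α β : Fin 4 → ℂ)
    (hα : ∀ t, α t ≠ 0) (hβ : ∀ t, β t ≠ 0)
    (hdist : ∀ t s : Fin 4, t ≠ s → α t * β s ≠ α s * β t)
    (hW : ∀ t, ∀ m : ℕ, 1 ≤ m → β t ≠ -(m : ℂ) * α t ∧ (m : ℂ) * β t ≠ -α t)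
    (a b : ℕ) (Ia Ib : Finset ℕ) (hIa : Ia.card = a) (hIb : Ib.card = b)
    (h0a : 0 ∈ Ia) (h0b : 0 ∈ Ib) :
    (∀ i ∈ Ia, ∀ k ∈ Ia, ∀ j ∈ Ib, ∀ l ∈ Ib,
      ∀ (h1 : PQvec α β i j ≠ 0) (h2 : PQvec α β k l ≠ 0),
        (Projectivization.mk ℂ (PQvec α β i j) h1 =
          Projectivization.mk ℂ (PQvec α β k l) h2 ↔ i = k ∧ j = l)) ∧
    Set.ncard {z : Projectivization ℂ (Fin 4 → ℂ) |
      ∃ i ∈ Ia, ∃ j ∈ Ib, ∃ h : PQvec α β i j ≠ 0,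
        z = Projectivization.mk ℂ (PQvec α β i j) h} = a * b := by
  haveI : DecidableEq (Projectivization ℂ (Fin 4 → ℂ)) := Classical.decEq _
  have hne := PQvec_ne α β hα hβ hW
  have key : ∀ i k j l : ℕ, ∀ (h1 : PQvec α β i j ≠ 0) (h2 : PQvec α β k l ≠ 0),
      (Projectivization.mk ℂ (PQvec α β i j) h1 =
        Projectivization.mk ℂ (PQvec α β k l) h2 ↔ i = k ∧ j = l) := by
    intro i k j l h1 h2
    constructor
    · intro h
      rw [Projectivization.mk_eq_mk_iff] at h
      obtain ⟨u, hu⟩ := h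
      exact PQ_inj α β hα hβ hdist i j k l u u.ne_zero (fun t => congrFun hu t)
    · rintro ⟨rfl, rfl⟩; rfl
  refine ⟨fun i _ k _ j _ l _ h1 h2 => key i k j l h1 h2, ?_⟩
  have hset : {z : Projectivization ℂ (Fin 4 → ℂ) |
      ∃ i ∈ Ia, ∃ j ∈ Ib, ∃ h : PQvec α β i j ≠ 0,
        z = Projectivization.mk ℂ (PQvec α β i j) h} =
      ↑(@Finset.image _ _ (‹DecidableEq (Projectivization ℂ (Fin 4 → ℂ))›) (fun p : ℕ × ℕ => Projectivization.mk ℂ (PQvec α β p.1 p.2) (hne p.1 p.2)) (Ia ×ˢ Ib)) := by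
    ext z
    simp only [Set.mem_setOf_eq, Finset.coe_image, Set.mem_image, Finset.mem_coe,
      Finset.mem_product]
    constructor
    · rintro ⟨i, hi, j, hj, h, rfl⟩
      exact ⟨(i, j), ⟨hi, hj⟩, rfl⟩
    · rintro ⟨⟨i, j⟩, ⟨hi, hj⟩, rfl⟩
      exact ⟨i, hi, j, hj, hne i j, rfl⟩
  rw [hset, Set.ncard_coe_finset, Finset.card_image_of_injOn, Finset.card_product, hIa, hIb]
  rintro ⟨i, j⟩ hij ⟨k, l⟩ hkl hfkl
  have := (key i k j l (hne i j) (hne k l)).mp hfkl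
  simp [Prod.ext_iff, this.1, this.2]
end

section
/- With hypotheses as above (four distinct A_i ∈ ℙ^1∖(Δ_0 ∪ W)), all the points P_i^A ⋆ Q_j^A, for i ∈ I(a) and j ∈ I(b), lie on a single plane in ℙ^3, namely the plane with equation Σ_{t=0}^3 (−1)^{t+1} α_tβ_t |M(t+1)| x_t = 0, where M is the 3×4 matrix with rows (α_tβ_t)_t, (α_t²)_t, (β_t²)_t and |M(t+1)| is the determinant of M with the (t+1)-th column removed. -/
/-- The 3×4 matrix M with rows (α_tβ_t), (α_t²), (β_t²). -/
def Mmat (α β : Fin 4 → ℂ) : Matrix (Fin 3) (Fin 4) ℂ :=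
  Matrix.of ![fun t => α t * β t, fun t => α t ^ 2, fun t => β t ^ 2]

/-- |M(t+1)|: the determinant of M with the (t+1)-st column (0-based: column t) removed. -/
def Mminor (α β : Fin 4 → ℂ) (t : Fin 4) : ℂ :=
  ((Mmat α β).submatrix id t.succAbove).det

lemma key_cofactor (α β : Fin 4 → ℂ) (c1 c2 c3 : ℂ) :
    ∑ t : Fin 4, (-1 : ℂ) ^ ((t : ℕ) + 1) * Mminor α β t *
      (c1 * α t ^ 2 + c2 * (α t * β t) + c3 * β t ^ 2) = 0 := by
  have h : (Fin.succ 2 : Fin 4) = 3 := rfl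
  have h1 : (Fin.succ 1 : Fin 4) = 2 := rfl
  have h0 : (Fin.succ 0 : Fin 4) = 1 := rfl
  have hc0 : (Fin.castSucc 0 : Fin 4) = 0 := rfl
  have hc1 : (Fin.castSucc 1 : Fin 4) = 1 := rfl
  have hc2 : (Fin.castSucc 2 : Fin 4) = 2 := rfl
  have hv0 : ((0 : Fin 4) : ℕ) = 0 := rfl
  have hv1 : ((1 : Fin 4) : ℕ) = 1 := rfl
  have hv2 : ((2 : Fin 4) : ℕ) = 2 := rfl
  have hv3 : ((3 : Fin 4) : ℕ) = 3 := rfl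
  have hx : ∀ a b c : ℂ, Matrix.vecCons a (fun i => Matrix.vecCons b (fun _ : Fin 1 => c) i) 2 = c :=
    fun _ _ _ => rfl
  simp only [Fin.sum_univ_four, Mminor, Mmat, Matrix.det_fin_three,
    Matrix.submatrix_apply, Matrix.of_apply, id_eq]
  norm_num [Matrix.cons_val, Fin.succAbove, Fin.lt_def, h, h1, h0, hc0, hc1, hc2, hv0, hv1, hv2, hv3, hx]
  ring

/-- all the points P_i^A ⋆ Q_j^A (i ∈ I(a), j ∈ I(b)) lie on the plane
Σ_t (−1)^{t+1} α_tβ_t |M(t+1)| x_t = 0. -/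
theorem PQ_coplanar (α β : Fin 4 → ℂ)
    (hα : ∀ t, α t ≠ 0) (hβ : ∀ t, β t ≠ 0)
    (hdist : ∀ t s : Fin 4, t ≠ s → α t * β s ≠ α s * β t)
    (hW : ∀ t, ∀ m : ℕ, 1 ≤ m → β t ≠ -(m : ℂ) * α t ∧ (m : ℂ) * β t ≠ -α t)
    (Ia Ib : Finset ℕ) (h0a : 0 ∈ Ia) (h0b : 0 ∈ Ib) :
    ∀ i ∈ Ia, ∀ j ∈ Ib,
      ∑ t : Fin 4, (-1 : ℂ) ^ ((t : ℕ) + 1) * (α t * β t) * Mminor α β t * PQvec α β i j t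
        = 0 := by
  intro i hi j hj
  have hstep : ∀ t : Fin 4,
      (-1 : ℂ) ^ ((t : ℕ) + 1) * (α t * β t) * Mminor α β t * PQvec α β i j t
        = (-1 : ℂ) ^ ((t : ℕ) + 1) * Mminor α β t *
            ((j : ℂ) * α t ^ 2 + (1 + (i : ℂ) * (j : ℂ)) * (α t * β t) + (i : ℂ) * β t ^ 2) := by
    intro t
    have hab : α t * β t ≠ 0 := mul_ne_zero (hα t) (hβ t)
    rw [PQvec]
    field_simp [hα t, hβ t]
    ring
  calc ∑ t : Fin 4, (-1 : ℂ) ^ ((t : ℕ) + 1) * (α t * β t) * Mminor α β t * PQvec α β i j t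
      = ∑ t : Fin 4, (-1 : ℂ) ^ ((t : ℕ) + 1) * Mminor α β t *
          ((j : ℂ) * α t ^ 2 + (1 + (i : ℂ) * (j : ℂ)) * (α t * β t) + (i : ℂ) * β t ^ 2) :=
        Finset.sum_congr rfl fun t _ => hstep t
    _ = 0 := key_cofactor α β _ _ _
end

section
/- Let A_i (i=0,...,3) be four distinct points of ℙ^1 with nonzero coordinates avoiding W. Then the line ℓ^P through [1:1:1:1] and P_1^A contains no coordinate point of ℙ^3 (i.e., ℓ^P ∩ Δ_0 = ∅), and similarly ℓ^Q ∩ Δ_0 = ∅. -/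
/-- The point P_k^A ∈ ℙ³ (affine representative). -/
noncomputable def Pvec (α β : Fin 4 → ℂ) (k : ℕ) : Fin 4 → ℂ :=
  fun t => (α t + (k : ℂ) * β t) / α t

/-- The point Q_k^A ∈ ℙ³ (affine representative). -/
noncomputable def Qvec (α β : Fin 4 → ℂ) (k : ℕ) : Fin 4 → ℂ :=
  fun t => ((k : ℂ) * α t + β t) / β t

lemma span_helper (v : Fin 4 → ℂ) (hv : ∀ s t : Fin 4, s ≠ t → v s ≠ v t) :
    ∀ x ∈ Submodule.span ℂ {(fun _ => 1 : Fin 4 → ℂ), v}, x ≠ 0 →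
      ¬∃ c : Fin 4, ∀ s : Fin 4, s ≠ c → x s = 0 := by
  intro x hx hxne hex
  obtain ⟨c, hc⟩ := hex
  rw [Submodule.mem_span_pair] at hx
  obtain ⟨a, b, rfl⟩ := hx
  set s : Fin 4 := if c = 0 then 1 else 0 with hs_def
  set t : Fin 4 := if c = 3 then 2 else 3 with ht_def
  have hs : s ≠ c := by fin_cases c <;> simp [hs_def]
  have ht : t ≠ c := by fin_cases c <;> simp [ht_def]
  have hst : s ≠ t := by fin_cases c <;> simp [hs_def, ht_def]
  have h1 := hc s hs
  have h2 := hc t ht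
  simp only [Pi.add_apply, Pi.smul_apply, smul_eq_mul, mul_one] at h1 h2
  have hb : b = 0 := by
    by_contra hb
    exact hv s t hst (by
      have h3 : b * v s = b * v t := by linear_combination h1 - h2
      exact mul_left_cancel₀ hb h3)
  have ha : a = 0 := by
    rw [hb, zero_mul, add_zero] at h1
    exact h1
  apply hxne
  funext i
  simp [ha, hb]

/-- the lines ℓ^P (through [1:1:1:1] and P₁^A) and ℓ^Q (through
[1:1:1:1] and Q₁^A) contain no coordinate point of ℙ³: no nonzero vector of these
planes of ℂ⁴ has all but one coordinate equal to zero. -/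
theorem lines_avoid_Delta0 (α β : Fin 4 → ℂ)
    (hα : ∀ t, α t ≠ 0) (hβ : ∀ t, β t ≠ 0)
    (hdist : ∀ t s : Fin 4, t ≠ s → α t * β s ≠ α s * β t)
    (hW : ∀ t, ∀ m : ℕ, 1 ≤ m → β t ≠ -(m : ℂ) * α t ∧ (m : ℂ) * β t ≠ -α t) :
    (∀ x ∈ Submodule.span ℂ {(fun _ => 1 : Fin 4 → ℂ), Pvec α β 1}, x ≠ 0 →
      ¬∃ c : Fin 4, ∀ s : Fin 4, s ≠ c → x s = 0) ∧
    (∀ x ∈ Submodule.span ℂ {(fun _ => 1 : Fin 4 → ℂ), Qvec α β 1}, x ≠ 0 →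
      ¬∃ c : Fin 4, ∀ s : Fin 4, s ≠ c → x s = 0) := by
  constructor
  · apply span_helper
    intro s t hst heq
    apply hdist s t hst
    simp only [Pvec, Nat.cast_one, one_mul] at heq
    rw [div_eq_div_iff (hα s) (hα t)] at heq
    linear_combination -heq
  · apply span_helper
    intro s t hst heq
    apply hdist s t hst
    simp only [Qvec, Nat.cast_one, one_mul] at heq
    rw [div_eq_div_iff (hβ s) (hβ t)] at heq
    linear_combination heq
end

section
/- Let A_i (i=0,...,3) be four distinct points of ℙ^1 with nonzero coordinates avoiding W. For any indices i,j,k,l with (i,j) ≠ (k,l), the line r_{ijkl} through P_i^A ⋆ Q_j^A and P_k^A ⋆ Q_l^A contains no coordinate point of ℙ^3. -/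
lemma pq_coeffs_zero (i j k l : ℕ)
    (hP : ((j : ℂ) - l) + (j : ℂ) * l * ((k : ℂ) - i) = 0)
    (hS : ((k : ℂ) - i) + (i : ℂ) * k * ((j : ℂ) - l) = 0) :
    (i, j) = (k, l) := by
  have h1 : ((k : ℂ) - i) * (1 - (i : ℂ) * j * k * l) = 0 := by
    linear_combination hS - (i : ℂ) * k * hP
  rcases mul_eq_zero.mp h1 with h | h
  · have hik : (i : ℂ) = (k : ℂ) := (sub_eq_zero.mp h).symm
    have hik' : i = k := Nat.cast_injective hik
    have hjl : (j : ℂ) = (l : ℂ) := by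
      have h2 : ((j : ℂ) - l) = 0 := by
        rw [hik, sub_self, mul_zero, add_zero] at hP
        exact hP
      exact sub_eq_zero.mp h2
    have hjl' : j = l := Nat.cast_injective hjl
    simp [hik', hjl']
  · have hc : ((i * j * k * l : ℕ) : ℂ) = 1 := by push_cast; linear_combination -h
    have h2 : i * j * k * l = 1 := by exact_mod_cast hc
    have h4 : i * j * k = 1 := Nat.eq_one_of_mul_eq_one_right h2
    have h5 : i * j = 1 := Nat.eq_one_of_mul_eq_one_right h4
    have h6 : i = 1 := Nat.eq_one_of_mul_eq_one_right h5
    have h7 : j = 1 := Nat.eq_one_of_mul_eq_one_left h5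
    have h8 : k = 1 := Nat.eq_one_of_mul_eq_one_left h4
    have h9 : l = 1 := Nat.eq_one_of_mul_eq_one_left h2
    simp [h6, h7, h8, h9]

/-- for (i,j) ≠ (k,l), the line r_{ijkl} through P_i^A ⋆ Q_j^A and
P_k^A ⋆ Q_l^A contains no coordinate point of ℙ³. -/
theorem rline_avoids_Delta0 (α β : Fin 4 → ℂ)
    (hα : ∀ t, α t ≠ 0) (hβ : ∀ t, β t ≠ 0)
    (hdist : ∀ t s : Fin 4, t ≠ s → α t * β s ≠ α s * β t)
    (hW : ∀ t, ∀ m : ℕ, 1 ≤ m → β t ≠ -(m : ℂ) * α t ∧ (m : ℂ) * β t ≠ -α t)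
    (i j k l : ℕ) (hne : (i, j) ≠ (k, l)) :
    ∀ x ∈ Submodule.span ℂ {PQvec α β i j, PQvec α β k l}, x ≠ 0 →
      ¬∃ c : Fin 4, ∀ s : Fin 4, s ≠ c → x s = 0 := by
  intro x hx hx0
  rintro ⟨c, hc⟩
  obtain ⟨a, b, hab⟩ := Submodule.mem_span_pair.mp hx
  set F : Fin 4 → ℂ := fun t => (α t + (i : ℂ) * β t) * ((j : ℂ) * α t + β t) with hFdef
  set G : Fin 4 → ℂ := fun t => (α t + (k : ℂ) * β t) * ((l : ℂ) * α t + β t) with hGdef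
  have hfac1 : ∀ (t : Fin 4) (m : ℕ), α t + (m : ℂ) * β t ≠ 0 := by
    intro t m
    rcases Nat.eq_zero_or_pos m with hm | hm
    · simpa [hm] using hα t
    · intro h
      exact (hW t m hm).2 (by linear_combination h)
  have hfac2 : ∀ (t : Fin 4) (m : ℕ), (m : ℂ) * α t + β t ≠ 0 := by
    intro t m
    rcases Nat.eq_zero_or_pos m with hm | hm
    · simpa [hm] using hβ t
    · intro h
      exact (hW t m hm).1 (by linear_combination h)
  have hFne : ∀ t, F t ≠ 0 := fun t => mul_ne_zero (hfac1 t i) (hfac2 t j)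
  have hGne : ∀ t, G t ≠ 0 := fun t => mul_ne_zero (hfac1 t k) (hfac2 t l)
  obtain ⟨s1, s2, s3, h1c, h2c, h3c, h12, h13, h23⟩ :
      ∃ s1 s2 s3 : Fin 4, s1 ≠ c ∧ s2 ≠ c ∧ s3 ≠ c ∧ s1 ≠ s2 ∧ s1 ≠ s3 ∧ s2 ≠ s3 := by
    have hex : ∀ d : Fin 4, ∃ s1 s2 s3 : Fin 4,
        s1 ≠ d ∧ s2 ≠ d ∧ s3 ≠ d ∧ s1 ≠ s2 ∧ s1 ≠ s3 ∧ s2 ≠ s3 := by decide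
    exact hex c
  have key : ∀ s : Fin 4, s ≠ c → a * F s + b * G s = 0 := by
    intro s hs
    have hxs : a * PQvec α β i j s + b * PQvec α β k l s = 0 := by
      have h := congrFun hab s
      simp only [Pi.add_apply, Pi.smul_apply, smul_eq_mul] at h
      rw [h, hc s hs]
    have hαβ : α s * β s ≠ 0 := mul_ne_zero (hα s) (hβ s)
    rw [PQvec, PQvec] at hxs
    field_simp at hxs
    have hxs' := (div_eq_zero_iff.mp hxs).resolve_right hαβ
    linear_combination hxs'
  by_cases ha : a = 0
  · have hb : b = 0 := by
      have h := key s1 h1c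
      rw [ha, zero_mul, zero_add] at h
      exact (mul_eq_zero.mp h).resolve_right (hGne s1)
    exact hx0 (by rw [← hab, ha, hb]; simp)
  by_cases hb : b = 0
  · have ha' : a = 0 := by
      have h := key s1 h1c
      rw [hb, zero_mul, add_zero] at h
      exact (mul_eq_zero.mp h).resolve_right (hFne s1)
    exact absurd ha' ha
  have minor : ∀ s s' : Fin 4, s ≠ c → s' ≠ c → F s * G s' - F s' * G s = 0 := by
    intro s s' hs hs'
    have e1 := key s hs
    have e2 := key s' hs'
    have h0 : a * (F s * G s' - F s' * G s) = 0 := by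
      linear_combination G s' * e1 - G s * e2
    exact (mul_eq_zero.mp h0).resolve_left ha
  set P : ℂ := ((j : ℂ) - l) + (j : ℂ) * l * ((k : ℂ) - i) with hPdef
  set R : ℂ := (j : ℂ) * k - (i : ℂ) * l with hRdef
  set S : ℂ := ((k : ℂ) - i) + (i : ℂ) * k * ((j : ℂ) - l) with hSdef
  have Qeq : ∀ s s' : Fin 4, s ≠ s' → s ≠ c → s' ≠ c →
      P * (α s * α s') + R * (α s * β s' + α s' * β s) + S * (β s * β s') = 0 := by
    intro s s' hss hs hs'
    have hD : α s * β s' - α s' * β s ≠ 0 := sub_ne_zero.mpr (hdist s s' hss)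
    have hm := minor s s' hs hs'
    have h0 : (α s * β s' - α s' * β s) *
        (P * (α s * α s') + R * (α s * β s' + α s' * β s) + S * (β s * β s')) = 0 := by
      rw [hPdef, hRdef, hSdef, hFdef, hGdef] at *
      linear_combination hm
    exact (mul_eq_zero.mp h0).resolve_left hD
  have E12 := Qeq s1 s2 h12 h1c h2c
  have E13 := Qeq s1 s3 h13 h1c h3c
  have E23 := Qeq s2 s3 h23 h2c h3c
  have hD12 : α s1 * β s2 - α s2 * β s1 ≠ 0 := sub_ne_zero.mpr (hdist _ _ h12)
  have hD13 : α s1 * β s3 - α s3 * β s1 ≠ 0 := sub_ne_zero.mpr (hdist _ _ h13)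
  have hD23 : α s2 * β s3 - α s3 * β s2 ≠ 0 := sub_ne_zero.mpr (hdist _ _ h23)
  have hDD : (α s1 * β s2 - α s2 * β s1) * (α s1 * β s3 - α s3 * β s1) *
      (α s2 * β s3 - α s3 * β s2) ≠ 0 := mul_ne_zero (mul_ne_zero hD12 hD13) hD23
  have hP : P = 0 := by
    have h0 : (α s1 * β s2 - α s2 * β s1) * (α s1 * β s3 - α s3 * β s1) *
        (α s2 * β s3 - α s3 * β s2) * P = 0 := by
      linear_combination (β s3 * β s3 * (α s1 * β s2 - α s2 * β s1)) * E12
        - (β s2 * β s2 * (α s1 * β s3 - α s3 * β s1)) * E13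
        + (β s1 * β s1 * (α s2 * β s3 - α s3 * β s2)) * E23
    exact (mul_eq_zero.mp h0).resolve_left hDD
  have hS : S = 0 := by
    have h0 : (α s1 * β s2 - α s2 * β s1) * (α s1 * β s3 - α s3 * β s1) *
        (α s2 * β s3 - α s3 * β s2) * S = 0 := by
      linear_combination (α s3 * α s3 * (α s1 * β s2 - α s2 * β s1)) * E12
        - (α s2 * α s2 * (α s1 * β s3 - α s3 * β s1)) * E13
        + (α s1 * α s1 * (α s2 * β s3 - α s3 * β s2)) * E23
    exact (mul_eq_zero.mp h0).resolve_left hDD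
  exact hne (pq_coeffs_zero i j k l hP hS)
end

section
/- Assume 1 ∉ I(a) ∪ I(b), with the A_i four distinct points of ℙ^1 with nonzero coordinates avoiding W, and j ≠ l in I(b). Then the lines P_i^A ⋆ Q_j^A ⋆ L^A and P_i^A ⋆ Q_l^A ⋆ L^A meet exactly in the point whose t-th coordinate is (−1)^{t+1} (α_t+iβ_t)(jα_t+β_t)(lα_t+β_t) / (α_tβ_t Π_{r≠t}(α_{min(t,r)}β_{max(t,r)} − α_{max(t,r)}β_{min(t,r)})), with signs as in formula (5.1) of the source. -/
/-- The cone over the line L^A: solutions of Σ α_t x_t = 0 = Σ β_t x_t. -/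
def LAset (α β : Fin 4 → ℂ) : Set (Fin 4 → ℂ) :=
  {x | (∑ t, α t * x t) = 0 ∧ (∑ t, β t * x t) = 0}

/-- The line P_i^A ⋆ Q_j^A ⋆ L^A, as a subset of ℙ³. -/
def lineIJ (α β : Fin 4 → ℂ) (i j : ℕ) : Set (Projectivization ℂ (Fin 4 → ℂ)) :=
  {z | ∃ x ∈ LAset α β, ∃ h : (fun t => PQvec α β i j t * x t) ≠ 0,
    z = Projectivization.mk ℂ (fun t => PQvec α β i j t * x t) h}

/-- The 2×2 minor α_uβ_v − α_vβ_u. -/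
def Dd (α β : Fin 4 → ℂ) (u v : Fin 4) : ℂ := α u * β v - α v * β u

/-- The representative of the intersection point of the lines P_i⋆Q_j⋆L^A and
P_i⋆Q_l⋆L^A (formula (5.1) of the source). -/
noncomputable def Vvec (α β : Fin 4 → ℂ) (i j l : ℕ) : Fin 4 → ℂ := fun t =>
  (-1 : ℂ) ^ ((t : ℕ) + 1) *
    ((α t + (i : ℂ) * β t) * ((j : ℂ) * α t + β t) * ((l : ℂ) * α t + β t)) /
    (α t * β t * ∏ r ∈ Finset.univ.erase t, Dd α β (min t r) (max t r))

/- ### Auxiliary machinery -/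

/-- A denominator-free representative of the point `(P_i⋆Q_l⋆L^A) ∩ (P_i⋆Q_j⋆L^A)`
pushed back to `L^A` by the diagonal map with entries `PQvec α β i l`. -/
noncomputable def Xv (α β : Fin 4 → ℂ) (l : ℕ) : Fin 4 → ℂ
  | 0 => -(((l:ℂ)) * α 0 + β 0) * (Dd α β 1 2 * Dd α β 1 3 * Dd α β 2 3)
  | 1 => ((l:ℂ) * α 1 + β 1) * (Dd α β 0 2 * Dd α β 0 3 * Dd α β 2 3)
  | 2 => -(((l:ℂ)) * α 2 + β 2) * (Dd α β 0 1 * Dd α β 0 3 * Dd α β 1 3)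
  | 3 => ((l:ℂ) * α 3 + β 3) * (Dd α β 0 1 * Dd α β 0 2 * Dd α β 1 2)

/-- The product of all six minors. -/
def Cd (α β : Fin 4 → ℂ) : ℂ :=
  Dd α β 0 1 * Dd α β 0 2 * Dd α β 0 3 * Dd α β 1 2 * Dd α β 1 3 * Dd α β 2 3

lemma Xv_suma (α β : Fin 4 → ℂ) (l : ℕ) : (∑ t, α t * Xv α β l t) = 0 := by
  rw [Fin.sum_univ_four]
  show α 0 * (-(((l:ℂ)) * α 0 + β 0) * (Dd α β 1 2 * Dd α β 1 3 * Dd α β 2 3))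
      + α 1 * (((l:ℂ) * α 1 + β 1) * (Dd α β 0 2 * Dd α β 0 3 * Dd α β 2 3))
      + α 2 * (-(((l:ℂ)) * α 2 + β 2) * (Dd α β 0 1 * Dd α β 0 3 * Dd α β 1 3))
      + α 3 * (((l:ℂ) * α 3 + β 3) * (Dd α β 0 1 * Dd α β 0 2 * Dd α β 1 2)) = 0
  simp only [Dd]; ring

lemma Xv_sumb (α β : Fin 4 → ℂ) (l : ℕ) : (∑ t, β t * Xv α β l t) = 0 := by
  rw [Fin.sum_univ_four]
  show β 0 * (-(((l:ℂ)) * α 0 + β 0) * (Dd α β 1 2 * Dd α β 1 3 * Dd α β 2 3))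
      + β 1 * (((l:ℂ) * α 1 + β 1) * (Dd α β 0 2 * Dd α β 0 3 * Dd α β 2 3))
      + β 2 * (-(((l:ℂ)) * α 2 + β 2) * (Dd α β 0 1 * Dd α β 0 3 * Dd α β 1 3))
      + β 3 * (((l:ℂ) * α 3 + β 3) * (Dd α β 0 1 * Dd α β 0 2 * Dd α β 1 2)) = 0
  simp only [Dd]; ring

lemma Xv_rel (α β : Fin 4 → ℂ) (j l : ℕ) (t : Fin 4) :
    ((l:ℂ) * α t + β t) * Xv α β j t = ((j:ℂ) * α t + β t) * Xv α β l t := by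
  match t with
  | 0 => simp only [Xv, Dd]; ring
  | 1 => simp only [Xv, Dd]; ring
  | 2 => simp only [Xv, Dd]; ring
  | 3 => simp only [Xv, Dd]; ring

lemma prodD0 (α β : Fin 4 → ℂ) :
    (∏ r ∈ Finset.univ.erase (0:Fin 4), Dd α β (min 0 r) (max 0 r))
      = Dd α β 0 1 * Dd α β 0 2 * Dd α β 0 3 := by
  rw [show (Finset.univ.erase (0:Fin 4)) = {1,2,3} from by decide]
  rw [Finset.prod_insert (by decide), Finset.prod_insert (by decide), Finset.prod_singleton]
  rw [show min (0:Fin 4) 1 = 0 from by decide, show max (0:Fin 4) 1 = 1 from by decide,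
    show min (0:Fin 4) 2 = 0 from by decide, show max (0:Fin 4) 2 = 2 from by decide,
    show min (0:Fin 4) 3 = 0 from by decide, show max (0:Fin 4) 3 = 3 from by decide]
  ring

lemma prodD1 (α β : Fin 4 → ℂ) :
    (∏ r ∈ Finset.univ.erase (1:Fin 4), Dd α β (min 1 r) (max 1 r))
      = Dd α β 0 1 * Dd α β 1 2 * Dd α β 1 3 := by
  rw [show (Finset.univ.erase (1:Fin 4)) = {0,2,3} from by decide]
  rw [Finset.prod_insert (by decide), Finset.prod_insert (by decide), Finset.prod_singleton]
  rw [show min (1:Fin 4) 0 = 0 from by decide, show max (1:Fin 4) 0 = 1 from by decide,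
    show min (1:Fin 4) 2 = 1 from by decide, show max (1:Fin 4) 2 = 2 from by decide,
    show min (1:Fin 4) 3 = 1 from by decide, show max (1:Fin 4) 3 = 3 from by decide]
  ring

lemma prodD2 (α β : Fin 4 → ℂ) :
    (∏ r ∈ Finset.univ.erase (2:Fin 4), Dd α β (min 2 r) (max 2 r))
      = Dd α β 0 2 * Dd α β 1 2 * Dd α β 2 3 := by
  rw [show (Finset.univ.erase (2:Fin 4)) = {0,1,3} from by decide]
  rw [Finset.prod_insert (by decide), Finset.prod_insert (by decide), Finset.prod_singleton]
  rw [show min (2:Fin 4) 0 = 0 from by decide, show max (2:Fin 4) 0 = 2 from by decide,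
    show min (2:Fin 4) 1 = 1 from by decide, show max (2:Fin 4) 1 = 2 from by decide,
    show min (2:Fin 4) 3 = 2 from by decide, show max (2:Fin 4) 3 = 3 from by decide]
  ring

lemma prodD3 (α β : Fin 4 → ℂ) :
    (∏ r ∈ Finset.univ.erase (3:Fin 4), Dd α β (min 3 r) (max 3 r))
      = Dd α β 0 3 * Dd α β 1 3 * Dd α β 2 3 := by
  rw [show (Finset.univ.erase (3:Fin 4)) = {0,1,2} from by decide]
  rw [Finset.prod_insert (by decide), Finset.prod_insert (by decide), Finset.prod_singleton]
  rw [show min (3:Fin 4) 0 = 0 from by decide, show max (3:Fin 4) 0 = 3 from by decide,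
    show min (3:Fin 4) 1 = 1 from by decide, show max (3:Fin 4) 1 = 3 from by decide,
    show min (3:Fin 4) 2 = 2 from by decide, show max (3:Fin 4) 2 = 3 from by decide]
  ring

/-- The key per-coordinate identity PQvec i j · Xv l = Cd · Vvec i j l. -/
lemma PQ_mul_Xv (α β : Fin 4 → ℂ) (hα : ∀ t, α t ≠ 0) (hβ : ∀ t, β t ≠ 0)
    (hD : ∀ u v : Fin 4, u ≠ v → Dd α β u v ≠ 0) (i j l : ℕ) (t : Fin 4) :
    PQvec α β i j t * Xv α β l t = Cd α β * Vvec α β i j l t := by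
  have d01 := hD 0 1 (by decide); have d02 := hD 0 2 (by decide)
  have d03 := hD 0 3 (by decide); have d12 := hD 1 2 (by decide)
  have d13 := hD 1 3 (by decide); have d23 := hD 2 3 (by decide)
  match t with
  | 0 =>
    simp only [PQvec, Vvec, Xv, Cd, prodD0]
    rw [show (((0:Fin 4)):ℕ) = 0 from rfl]
    norm_num
    field_simp [hα 0, hβ 0]
    ring
  | 1 =>
    simp only [PQvec, Vvec, Xv, Cd, prodD1]
    rw [show (((1:Fin 4)):ℕ) = 1 from rfl]
    norm_num
    field_simp [hα 1, hβ 1]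
  | 2 =>
    simp only [PQvec, Vvec, Xv, Cd, prodD2]
    rw [show (((2:Fin 4)):ℕ) = 2 from rfl]
    norm_num
    field_simp [hα 2, hβ 2]
    ring
  | 3 =>
    simp only [PQvec, Vvec, Xv, Cd, prodD3]
    rw [show (((3:Fin 4)):ℕ) = 3 from rfl]
    norm_num
    field_simp [hα 3, hβ 3]

set_option maxHeartbeats 4000000 in
/-- for j ≠ l, the lines P_i⋆Q_j⋆L^A and P_i⋆Q_l⋆L^A meet exactly
in the point with the coordinates (5.1). -/
theorem lines_intersection_point (α β : Fin 4 → ℂ)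
    (hα : ∀ t, α t ≠ 0) (hβ : ∀ t, β t ≠ 0)
    (hdist : ∀ t s : Fin 4, t ≠ s → α t * β s ≠ α s * β t)
    (hW : ∀ t, ∀ m : ℕ, 1 ≤ m → β t ≠ -(m : ℂ) * α t ∧ (m : ℂ) * β t ≠ -α t)
    (a b : ℕ) (Ia Ib : Finset ℕ) (hIa : Ia.card = a) (hIb : Ib.card = b)
    (h0a : 0 ∈ Ia) (h0b : 0 ∈ Ib) (h1a : 1 ∉ Ia) (h1b : 1 ∉ Ib)
    (i : ℕ) (hi : i ∈ Ia) (j l : ℕ) (hj : j ∈ Ib) (hl : l ∈ Ib) (hjl : j ≠ l) :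
    lineIJ α β i j ∩ lineIJ α β i l =
      {z | ∃ h : Vvec α β i j l ≠ 0, z = Projectivization.mk ℂ (Vvec α β i j l) h} := by
    -- basic nonvanishing facts
  have hLf : ∀ (m : ℕ) (t : Fin 4), (m:ℂ) * α t + β t ≠ 0 := by
    intro m t
    rcases Nat.eq_zero_or_pos m with hm | hm
    · subst hm; simpa using hβ t
    · intro h; exact (hW t m hm).1 (by linear_combination h)
  have hRf : ∀ (m : ℕ) (t : Fin 4), α t + (m:ℂ) * β t ≠ 0 := by
    intro m t
    rcases Nat.eq_zero_or_pos m with hm | hm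
    · subst hm; simpa using hα t
    · intro h; exact (hW t m hm).2 (by linear_combination h)
  have hD : ∀ u v : Fin 4, u ≠ v → Dd α β u v ≠ 0 :=
    fun u v h => sub_ne_zero.mpr (hdist u v h)
  have d01 := hD 0 1 (by decide); have d02 := hD 0 2 (by decide)
  have d03 := hD 0 3 (by decide); have d12 := hD 1 2 (by decide)
  have d13 := hD 1 3 (by decide); have d23 := hD 2 3 (by decide)
  have hCne : Cd α β ≠ 0 :=
    mul_ne_zero (mul_ne_zero (mul_ne_zero (mul_ne_zero (mul_ne_zero d01 d02) d03) d12) d13) d23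
  have hPQne : ∀ (m : ℕ) (t : Fin 4), PQvec α β i m t ≠ 0 := fun m t =>
    div_ne_zero (mul_ne_zero (hRf i t) (hLf m t)) (mul_ne_zero (hα t) (hβ t))
  have hPQXj : ∀ t, PQvec α β i j t * Xv α β l t = Cd α β * Vvec α β i j l t :=
    PQ_mul_Xv α β hα hβ hD i j l
  have hVsymm : Vvec α β i l j = Vvec α β i j l := funext fun t => by
    simp only [Vvec]; ring_nf
  have hPQXl : ∀ t, PQvec α β i l t * Xv α β j t = Cd α β * Vvec α β i j l t := by
    intro t; rw [← hVsymm]; exact PQ_mul_Xv α β hα hβ hD i l j t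
  have hX0 : Xv α β l 0 ≠ 0 := by
    show -(((l:ℂ)) * α 0 + β 0) * (Dd α β 1 2 * Dd α β 1 3 * Dd α β 2 3) ≠ 0
    exact mul_ne_zero (neg_ne_zero.mpr (hLf l 0)) (mul_ne_zero (mul_ne_zero d12 d13) d23)
  have hX0j : Xv α β j 0 ≠ 0 := by
    show -(((j:ℂ)) * α 0 + β 0) * (Dd α β 1 2 * Dd α β 1 3 * Dd α β 2 3) ≠ 0
    exact mul_ne_zero (neg_ne_zero.mpr (hLf j 0)) (mul_ne_zero (mul_ne_zero d12 d13) d23)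
  have hVne : Vvec α β i j l ≠ 0 := by
    intro h
    have h0 : Vvec α β i j l 0 = 0 := congrFun h 0
    have h1 := hPQXj 0
    rw [h0, mul_zero] at h1
    exact mul_ne_zero (hPQne j 0) hX0 h1
  ext z
  simp only [lineIJ, Set.mem_inter_iff, Set.mem_setOf_eq]
  constructor
  · rintro ⟨⟨x, ⟨hx1, hx2⟩, hxne, hzx⟩, ⟨y, ⟨hy1, hy2⟩, hyne, hzy⟩⟩
    obtain ⟨u, hu⟩ := (Projectivization.mk_eq_mk_iff ℂ _ _ hxne hyne).1 (hzx.symm.trans hzy)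
    -- the componentwise relation coming from the projective equality
    have hrel : ∀ t, ((l:ℂ) * α t + β t) * ((u:ℂ) * y t) = ((j:ℂ) * α t + β t) * x t := by
      intro t
      have h := congrFun hu t
      simp only [Pi.smul_apply, Units.smul_def, smul_eq_mul, PQvec] at h
      field_simp [hα t, hβ t] at h
      apply mul_left_cancel₀ (hRf i t)
      linear_combination h
    rw [Fin.sum_univ_four] at hx1 hx2 hy1 hy2
    have hz1 : α 0 * ((u:ℂ) * y 0) + α 1 * ((u:ℂ) * y 1) + α 2 * ((u:ℂ) * y 2)
        + α 3 * ((u:ℂ) * y 3) = 0 := by linear_combination (u:ℂ) * hy1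
    have hX1 := Xv_suma α β l; have hX2 := Xv_sumb α β l; have hY1 := Xv_suma α β j
    rw [Fin.sum_univ_four] at hX1 hX2 hY1
    have hA : (u:ℂ) * y 0 * Xv α β l 0 = x 0 * Xv α β j 0 :=
      mul_left_cancel₀ (hLf l 0)
        (by linear_combination Xv α β l 0 * hrel 0 - x 0 * Xv_rel α β j l 0)
    have e1 : α 1 * (x 1 * Xv α β l 0 - x 0 * Xv α β l 1)
        + α 2 * (x 2 * Xv α β l 0 - x 0 * Xv α β l 2)
        + α 3 * (x 3 * Xv α β l 0 - x 0 * Xv α β l 3) = 0 := by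
      linear_combination Xv α β l 0 * hx1 - x 0 * hX1
    have e2 : β 1 * (x 1 * Xv α β l 0 - x 0 * Xv α β l 1)
        + β 2 * (x 2 * Xv α β l 0 - x 0 * Xv α β l 2)
        + β 3 * (x 3 * Xv α β l 0 - x 0 * Xv α β l 3) = 0 := by
      linear_combination Xv α β l 0 * hx2 - x 0 * hX2
    have e13 : (α 1 * β 2 - α 2 * β 1) * (x 1 * Xv α β l 0 - x 0 * Xv α β l 1)
        - (α 2 * β 3 - α 3 * β 2) * (x 3 * Xv α β l 0 - x 0 * Xv α β l 3) = 0 := by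
      linear_combination β 2 * e1 - α 2 * e2
    have e23 : (α 1 * β 2 - α 2 * β 1) * (x 2 * Xv α β l 0 - x 0 * Xv α β l 2)
        + (α 1 * β 3 - α 3 * β 1) * (x 3 * Xv α β l 0 - x 0 * Xv α β l 3) = 0 := by
      linear_combination α 1 * e2 - β 1 * e1
    have E3 : α 1 * ((j:ℂ) * α 1 + β 1) * (((l:ℂ) * α 2 + β 2) * ((l:ℂ) * α 3 + β 3))
          * (x 1 * Xv α β l 0 - x 0 * Xv α β l 1)
        + α 2 * ((j:ℂ) * α 2 + β 2) * (((l:ℂ) * α 1 + β 1) * ((l:ℂ) * α 3 + β 3))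
          * (x 2 * Xv α β l 0 - x 0 * Xv α β l 2)
        + α 3 * ((j:ℂ) * α 3 + β 3) * (((l:ℂ) * α 1 + β 1) * ((l:ℂ) * α 2 + β 2))
          * (x 3 * Xv α β l 0 - x 0 * Xv α β l 3) = 0 := by
      linear_combination
        (((l:ℂ) * α 1 + β 1) * ((l:ℂ) * α 2 + β 2) * ((l:ℂ) * α 3 + β 3)) * Xv α β l 0 * hz1
        - (((l:ℂ) * α 1 + β 1) * ((l:ℂ) * α 2 + β 2) * ((l:ℂ) * α 3 + β 3)) * x 0 * hY1
        - (α 1 * (((l:ℂ) * α 2 + β 2) * ((l:ℂ) * α 3 + β 3)) * Xv α β l 0) * hrel 1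
        + (α 1 * (((l:ℂ) * α 2 + β 2) * ((l:ℂ) * α 3 + β 3)) * x 0) * Xv_rel α β j l 1
        - (α 2 * (((l:ℂ) * α 1 + β 1) * ((l:ℂ) * α 3 + β 3)) * Xv α β l 0) * hrel 2
        + (α 2 * (((l:ℂ) * α 1 + β 1) * ((l:ℂ) * α 3 + β 3)) * x 0) * Xv_rel α β j l 2
        - (α 3 * (((l:ℂ) * α 1 + β 1) * ((l:ℂ) * α 2 + β 2)) * Xv α β l 0) * hrel 3
        + (α 3 * (((l:ℂ) * α 1 + β 1) * ((l:ℂ) * α 2 + β 2)) * x 0) * Xv_rel α β j l 3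
        - (((l:ℂ) * α 1 + β 1) * ((l:ℂ) * α 2 + β 2) * ((l:ℂ) * α 3 + β 3)) * α 0 * hA
    have fin3 : (((j:ℂ) - (l:ℂ)) * (α 1 * β 2 - α 2 * β 1) * (α 1 * β 3 - α 3 * β 1)
        * (α 2 * β 3 - α 3 * β 2)) * (x 3 * Xv α β l 0 - x 0 * Xv α β l 3) = 0 := by
      linear_combination (α 1 * β 2 - α 2 * β 1) * E3
        - (α 1 * ((j:ℂ) * α 1 + β 1) * (((l:ℂ) * α 2 + β 2) * ((l:ℂ) * α 3 + β 3))) * e13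
        - (α 2 * ((j:ℂ) * α 2 + β 2) * (((l:ℂ) * α 1 + β 1) * ((l:ℂ) * α 3 + β 3))) * e23
    have hjlC : ((j:ℂ) - (l:ℂ)) ≠ 0 := sub_ne_zero.mpr (by exact_mod_cast hjl)
    have hKne : ((j:ℂ) - (l:ℂ)) * (α 1 * β 2 - α 2 * β 1) * (α 1 * β 3 - α 3 * β 1)
        * (α 2 * β 3 - α 3 * β 2) ≠ 0 :=
      mul_ne_zero (mul_ne_zero (mul_ne_zero hjlC d12) d13) d23
    have hd3 : x 3 * Xv α β l 0 - x 0 * Xv α β l 3 = 0 :=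
      (mul_eq_zero.mp fin3).resolve_left hKne
    have hd1 : x 1 * Xv α β l 0 - x 0 * Xv α β l 1 = 0 := by
      have h' : (α 1 * β 2 - α 2 * β 1) * (x 1 * Xv α β l 0 - x 0 * Xv α β l 1) = 0 := by
        linear_combination e13 + (α 2 * β 3 - α 3 * β 2) * hd3
      exact (mul_eq_zero.mp h').resolve_left d12
    have hd2 : x 2 * Xv α β l 0 - x 0 * Xv α β l 2 = 0 := by
      have h' : (α 1 * β 2 - α 2 * β 1) * (x 2 * Xv α β l 0 - x 0 * Xv α β l 2) = 0 := by
        linear_combination e23 - (α 1 * β 3 - α 3 * β 1) * hd3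
      exact (mul_eq_zero.mp h').resolve_left d12
    have hx0ne : x 0 ≠ 0 := by
      intro h0
      apply hxne
      have hx1z : x 1 = 0 := by
        have := hd1; rw [h0] at this
        simpa [hX0] using (mul_eq_zero.mp (by linear_combination this)).resolve_right hX0
      have hx2z : x 2 = 0 := by
        have := hd2; rw [h0] at this
        simpa [hX0] using (mul_eq_zero.mp (by linear_combination this)).resolve_right hX0
      have hx3z : x 3 = 0 := by
        have := hd3; rw [h0] at this
        simpa [hX0] using (mul_eq_zero.mp (by linear_combination this)).resolve_right hX0
      funext t
      simp only [Pi.zero_apply]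
      match t with
      | 0 => rw [h0, mul_zero]
      | 1 => rw [hx1z, mul_zero]
      | 2 => rw [hx2z, mul_zero]
      | 3 => rw [hx3z, mul_zero]
    refine ⟨hVne, ?_⟩
    rw [hzx]
    rw [Projectivization.mk_eq_mk_iff]
    refine ⟨Units.mk0 (x 0 * Cd α β / Xv α β l 0)
      (div_ne_zero (mul_ne_zero hx0ne hCne) hX0), ?_⟩
    funext t
    simp only [Pi.smul_apply, Units.smul_def, smul_eq_mul, Units.val_mk0]
    rw [div_mul_eq_mul_div, div_eq_iff hX0]
    match t with
    | 0 => linear_combination (-(x 0)) * hPQXj 0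
    | 1 => linear_combination (-(x 0)) * hPQXj 1 - PQvec α β i j 1 * hd1
    | 2 => linear_combination (-(x 0)) * hPQXj 2 - PQvec α β i j 2 * hd2
    | 3 => linear_combination (-(x 0)) * hPQXj 3 - PQvec α β i j 3 * hd3
  · rintro ⟨hV, hz⟩
    have hne1 : (fun t => PQvec α β i j t * Xv α β l t) ≠ 0 := by
      intro hcontra
      have := congrFun hcontra 0
      simp only [Pi.zero_apply] at this
      exact mul_ne_zero (hPQne j 0) hX0 this
    have hne2 : (fun t => PQvec α β i l t * Xv α β j t) ≠ 0 := by
      intro hcontra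
      have := congrFun hcontra 0
      simp only [Pi.zero_apply] at this
      exact mul_ne_zero (hPQne l 0) hX0j this
    constructor
    · refine ⟨Xv α β l, ⟨Xv_suma α β l, Xv_sumb α β l⟩, hne1, ?_⟩
      rw [hz]
      rw [Projectivization.mk_eq_mk_iff]
      refine ⟨(Units.mk0 (Cd α β) hCne)⁻¹, ?_⟩
      funext t
      simp only [Pi.smul_apply, Units.smul_def, smul_eq_mul, Units.val_inv_eq_inv_val,
        Units.val_mk0]
      rw [hPQXj t, inv_mul_cancel_left₀ hCne]
    · refine ⟨Xv α β j, ⟨Xv_suma α β j, Xv_sumb α β j⟩, hne2, ?_⟩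
      rw [hz]
      rw [Projectivization.mk_eq_mk_iff]
      refine ⟨(Units.mk0 (Cd α β) hCne)⁻¹, ?_⟩
      funext t
      simp only [Pi.smul_apply, Units.smul_def, smul_eq_mul, Units.val_inv_eq_inv_val,
        Units.val_mk0]
      rw [hPQXl t, inv_mul_cancel_left₀ hCne]
end

section
/- Assume 1 ∉ I(a) ∪ I(b), with the A_i four distinct points of ℙ^1 with nonzero coordinates avoiding W. Then the union Z_{a,b}^A ⋆ L^A of the ab lines P_i^A ⋆ Q_j^A ⋆ L^A (i ∈ I(a), j ∈ I(b)) is a stick figure: the lines are pairwise distinct, any two meet in at most one point, and no point lies on three of the lines. Moreover, this configuration is the complete intersection of the two surfaces Π_{j∈I(b)} F_j = 0 and Π_{i∈I(a)} G_i = 0, where F_j and G_i are the respective linear forms Σ_t (α_t²β_t/((α_t+iβ_t)(jα_t+β_t))) x_t and Σ_t (α_tβ_t²/((α_t+iβ_t)(jα_t+β_t))) x_t suitably grouped so that the lines P_{i}^A ⋆ Q_{j}^A ⋆ L^A with fixed j (respectively fixed i) are coplanar. -/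
/- ===================== auxiliary lemmas ===================== -/

private lemma vand4 (r0 r1 r2 r3 e0 e1 e2 e3 : ℂ)
    (h01 : r0 ≠ r1) (h02 : r0 ≠ r2) (h03 : r0 ≠ r3)
    (h12 : r1 ≠ r2) (h13 : r1 ≠ r3) (h23 : r2 ≠ r3)
    (H0 : e0 + e1*r0 + e2*r0^2 + e3*r0^3 = 0)
    (H1 : e0 + e1*r1 + e2*r1^2 + e3*r1^3 = 0)
    (H2 : e0 + e1*r2 + e2*r2^2 + e3*r2^3 = 0)
    (H3 : e0 + e1*r3 + e2*r3^2 + e3*r3^3 = 0) :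
    e0 = 0 ∧ e1 = 0 ∧ e2 = 0 ∧ e3 = 0 := by
  have d01 : e1 + e2*(r0+r1) + e3*(r0^2+r0*r1+r1^2) = 0 := by
    apply mul_left_cancel₀ (sub_ne_zero.2 h01); linear_combination H0 - H1
  have d02 : e1 + e2*(r0+r2) + e3*(r0^2+r0*r2+r2^2) = 0 := by
    apply mul_left_cancel₀ (sub_ne_zero.2 h02); linear_combination H0 - H2
  have d03 : e1 + e2*(r0+r3) + e3*(r0^2+r0*r3+r3^2) = 0 := by
    apply mul_left_cancel₀ (sub_ne_zero.2 h03); linear_combination H0 - H3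
  have f1 : e2 + e3*(r0+r1+r2) = 0 := by
    apply mul_left_cancel₀ (sub_ne_zero.2 h12); linear_combination d01 - d02
  have f2 : e2 + e3*(r0+r1+r3) = 0 := by
    apply mul_left_cancel₀ (sub_ne_zero.2 h13); linear_combination d01 - d03
  have g : e3 = 0 := by
    apply mul_left_cancel₀ (sub_ne_zero.2 h23); linear_combination f1 - f2
  have f : e2 = 0 := by linear_combination f1 - (r0+r1+r2) * g
  have d : e1 = 0 := by linear_combination d01 - (r0+r1)*f - (r0^2+r0*r1+r1^2)*g
  exact ⟨by linear_combination H0 - r0*d - r0^2*f - r0^3*g, d, f, g⟩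

private lemma vand3 (r0 r1 r2 e0 e1 e2 : ℂ)
    (h01 : r0 ≠ r1) (h02 : r0 ≠ r2) (h12 : r1 ≠ r2)
    (H0 : e0 + e1*r0 + e2*r0^2 = 0)
    (H1 : e0 + e1*r1 + e2*r1^2 = 0)
    (H2 : e0 + e1*r2 + e2*r2^2 = 0) :
    e0 = 0 ∧ e1 = 0 ∧ e2 = 0 := by
  have d01 : e1 + e2*(r0+r1) = 0 := by
    apply mul_left_cancel₀ (sub_ne_zero.2 h01); linear_combination H0 - H1
  have d02 : e1 + e2*(r0+r2) = 0 := by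
    apply mul_left_cancel₀ (sub_ne_zero.2 h02); linear_combination H0 - H2
  have g : e2 = 0 := by
    apply mul_left_cancel₀ (sub_ne_zero.2 h12); linear_combination d01 - d02
  have d : e1 = 0 := by linear_combination d01 - (r0+r1)*g
  exact ⟨by linear_combination H0 - r0*d - r0^2*g, d, g⟩

private lemma cauchyKernel (a b : Fin 4 → ℂ)
    (hcross : ∀ t s : Fin 4, t ≠ s → a t * b s ≠ a s * b t)
    (u v : Fin 4 → ℂ)
    (hnz : ∀ s t, u s * a t + v s * b t ≠ 0)
    (hnodes : ∀ s s' : Fin 4, s ≠ s' → u s * v s' ≠ u s' * v s)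
    (w : Fin 4 → ℂ)
    (hw : ∀ s, ∑ t, w t / (u s * a t + v s * b t) = 0) : w = 0 := by
  obtain ⟨E0, hE0def⟩ : ∃ E0 : ℂ, E0 = w 0*(a 1*a 2*a 3) + w 1*(a 0*a 2*a 3)
      + w 2*(a 0*a 1*a 3) + w 3*(a 0*a 1*a 2) := ⟨_, rfl⟩
  obtain ⟨E1, hE1def⟩ : ∃ E1 : ℂ, E1 = w 0*(a 1*a 2*b 3 + a 1*b 2*a 3 + b 1*a 2*a 3)
      + w 1*(a 0*a 2*b 3 + a 0*b 2*a 3 + b 0*a 2*a 3)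
      + w 2*(a 0*a 1*b 3 + a 0*b 1*a 3 + b 0*a 1*a 3)
      + w 3*(a 0*a 1*b 2 + a 0*b 1*a 2 + b 0*a 1*a 2) := ⟨_, rfl⟩
  obtain ⟨E2, hE2def⟩ : ∃ E2 : ℂ, E2 = w 0*(a 1*b 2*b 3 + b 1*a 2*b 3 + b 1*b 2*a 3)
      + w 1*(a 0*b 2*b 3 + b 0*a 2*b 3 + b 0*b 2*a 3)
      + w 2*(a 0*b 1*b 3 + b 0*a 1*b 3 + b 0*b 1*a 3)
      + w 3*(a 0*b 1*b 2 + b 0*a 1*b 2 + b 0*b 1*a 2) := ⟨_, rfl⟩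
  obtain ⟨E3, hE3def⟩ : ∃ E3 : ℂ, E3 = w 0*(b 1*b 2*b 3) + w 1*(b 0*b 2*b 3)
      + w 2*(b 0*b 1*b 3) + w 3*(b 0*b 1*b 2) := ⟨_, rfl⟩
  have HE : ∀ s, E0 * (u s)^3 + E1 * (u s)^2 * (v s) + E2 * (u s) * (v s)^2 + E3 * (v s)^3
      = 0 := by
    intro s
    have h := hw s
    rw [Fin.sum_univ_four] at h
    have h0 := hnz s 0
    have h1 := hnz s 1
    have h2 := hnz s 2
    have h3 := hnz s 3
    rw [hE0def, hE1def, hE2def, hE3def]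
    field_simp at h
    linear_combination h
  have key : E0 = 0 ∧ E1 = 0 ∧ E2 = 0 ∧ E3 = 0 := by
    by_cases hu : ∀ s, u s ≠ 0
    · have E : ∀ s, E0 + E1 * (v s/u s) + E2 * (v s/u s)^2 + E3 * (v s/u s)^3 = 0 := by
        intro s
        have h := HE s
        have hus := hu s
        field_simp
        linear_combination h
      have hr : ∀ s s' : Fin 4, s ≠ s' → v s / u s ≠ v s' / u s' := by
        intro s s' hss' heq
        apply hnodes s s' hss'
        rw [div_eq_div_iff (hu s) (hu s')] at heq
        linear_combination -heq
      exact vand4 _ _ _ _ _ _ _ _ (hr 0 1 (by decide)) (hr 0 2 (by decide))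
        (hr 0 3 (by decide)) (hr 1 2 (by decide)) (hr 1 3 (by decide)) (hr 2 3 (by decide))
        (E 0) (E 1) (E 2) (E 3)
    · push_neg at hu
      obtain ⟨s₀, hs₀⟩ := hu
      have hvs₀ : v s₀ ≠ 0 := by
        intro h
        exact hnz s₀ 0 (by rw [hs₀, h]; ring)
      have hE3 : E3 = 0 := by
        have h := HE s₀
        rw [hs₀] at h
        have h3 := pow_ne_zero 3 hvs₀
        have : E3 * (v s₀)^3 = 0 := by linear_combination h
        exact (mul_eq_zero.mp this).resolve_right h3
      have hus : ∀ s, s ≠ s₀ → u s ≠ 0 := by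
        intro s hs h
        exact hnodes s s₀ hs (by rw [h, hs₀]; ring)
      have E : ∀ s, s ≠ s₀ → E0 + E1 * (v s/u s) + E2 * (v s/u s)^2 = 0 := by
        intro s hs
        have h := HE s
        have husne := hus s hs
        field_simp
        apply mul_left_cancel₀ husne
        linear_combination h - (v s)^3 * hE3
      have hr : ∀ s s' : Fin 4, s ≠ s' → s ≠ s₀ → s' ≠ s₀ → v s / u s ≠ v s' / u s' := by
        intro s s' hss' hs hs' heq
        apply hnodes s s' hss'
        rw [div_eq_div_iff (hus s hs) (hus s' hs')] at heq
        linear_combination -heq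
      fin_cases s₀
      · obtain ⟨x, y, z⟩ := vand3 _ _ _ _ _ _ (hr 1 2 (by decide) (by decide) (by decide))
          (hr 1 3 (by decide) (by decide) (by decide)) (hr 2 3 (by decide) (by decide) (by decide))
          (E 1 (by decide)) (E 2 (by decide)) (E 3 (by decide))
        exact ⟨x, y, z, hE3⟩
      · obtain ⟨x, y, z⟩ := vand3 _ _ _ _ _ _ (hr 0 2 (by decide) (by decide) (by decide))
          (hr 0 3 (by decide) (by decide) (by decide)) (hr 2 3 (by decide) (by decide) (by decide))
          (E 0 (by decide)) (E 2 (by decide)) (E 3 (by decide))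
        exact ⟨x, y, z, hE3⟩
      · obtain ⟨x, y, z⟩ := vand3 _ _ _ _ _ _ (hr 0 1 (by decide) (by decide) (by decide))
          (hr 0 3 (by decide) (by decide) (by decide)) (hr 1 3 (by decide) (by decide) (by decide))
          (E 0 (by decide)) (E 1 (by decide)) (E 3 (by decide))
        exact ⟨x, y, z, hE3⟩
      · obtain ⟨x, y, z⟩ := vand3 _ _ _ _ _ _ (hr 0 1 (by decide) (by decide) (by decide))
          (hr 0 2 (by decide) (by decide) (by decide)) (hr 1 2 (by decide) (by decide) (by decide))
          (E 0 (by decide)) (E 1 (by decide)) (E 2 (by decide))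
        exact ⟨x, y, z, hE3⟩
  obtain ⟨Z0, Z1, Z2, Z3⟩ := key
  rw [hE0def] at Z0
  rw [hE1def] at Z1
  rw [hE2def] at Z2
  rw [hE3def] at Z3
  have ext : ∀ t : Fin 4, ∀ X : ℂ, X ≠ 0 → w t * X = 0 → w t = 0 := by
    intro t X hX h
    exact (mul_eq_zero.mp h).resolve_right hX
  funext t
  have c10 := sub_ne_zero.2 (hcross 1 0 (by decide))
  have c20 := sub_ne_zero.2 (hcross 2 0 (by decide))
  have c30 := sub_ne_zero.2 (hcross 3 0 (by decide))
  have c01 := sub_ne_zero.2 (hcross 0 1 (by decide))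
  have c21 := sub_ne_zero.2 (hcross 2 1 (by decide))
  have c31 := sub_ne_zero.2 (hcross 3 1 (by decide))
  have c02 := sub_ne_zero.2 (hcross 0 2 (by decide))
  have c12 := sub_ne_zero.2 (hcross 1 2 (by decide))
  have c32 := sub_ne_zero.2 (hcross 3 2 (by decide))
  have c03 := sub_ne_zero.2 (hcross 0 3 (by decide))
  have c13 := sub_ne_zero.2 (hcross 1 3 (by decide))
  have c23 := sub_ne_zero.2 (hcross 2 3 (by decide))
  fin_cases t
  · refine ext 0 ((a 1*b 0 - a 0*b 1)*((a 2*b 0 - a 0*b 2)*(a 3*b 0 - a 0*b 3)))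
      (mul_ne_zero c10 (mul_ne_zero c20 c30)) ?_
    linear_combination (b 0)^3 * Z0 - (a 0)*(b 0)^2 * Z1 + (a 0)^2*(b 0) * Z2 - (a 0)^3 * Z3
  · refine ext 1 ((a 0*b 1 - a 1*b 0)*((a 2*b 1 - a 1*b 2)*(a 3*b 1 - a 1*b 3)))
      (mul_ne_zero c01 (mul_ne_zero c21 c31)) ?_
    linear_combination (b 1)^3 * Z0 - (a 1)*(b 1)^2 * Z1 + (a 1)^2*(b 1) * Z2 - (a 1)^3 * Z3
  · refine ext 2 ((a 0*b 2 - a 2*b 0)*((a 1*b 2 - a 2*b 1)*(a 3*b 2 - a 2*b 3)))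
      (mul_ne_zero c02 (mul_ne_zero c12 c32)) ?_
    linear_combination (b 2)^3 * Z0 - (a 2)*(b 2)^2 * Z1 + (a 2)^2*(b 2) * Z2 - (a 2)^3 * Z3
  · refine ext 3 ((a 0*b 3 - a 3*b 0)*((a 1*b 3 - a 3*b 1)*(a 2*b 3 - a 3*b 2)))
      (mul_ne_zero c03 (mul_ne_zero c13 c23)) ?_
    linear_combination (b 3)^3 * Z0 - (a 3)*(b 3)^2 * Z1 + (a 3)^2*(b 3) * Z2 - (a 3)^3 * Z3

private lemma fin4cover : ∀ s : Fin 4, s = 0 ∨ s = 1 ∨ s = 2 ∨ s = 3 := by decide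

private lemma fin3cover : ∀ s : Fin 3, s = 0 ∨ s = 1 ∨ s = 2 := by decide

private lemma exists_fourth (α β : Fin 4 → ℂ) (hβ : ∀ t, β t ≠ 0) (p q : Fin 3 → ℂ)
    (hpq : ∀ k, p k ≠ 0 ∨ q k ≠ 0) :
    ∃ c : ℂ, (∀ t, α t + c * β t ≠ 0) ∧ (∀ k, p k * c ≠ q k) := by
  classical
  obtain ⟨c, hc⟩ := Infinite.exists_notMem_finset
    ((Finset.univ.image fun t => -α t / β t) ∪ (Finset.univ.image fun k => q k / p k))
  refine ⟨c, fun t h => ?_, fun k h => ?_⟩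
  · apply hc
    apply Finset.mem_union_left
    rw [Finset.mem_image]
    exact ⟨t, Finset.mem_univ t, by rw [div_eq_iff (hβ t)]; linear_combination -h⟩
  · apply hc
    rcases eq_or_ne (p k) 0 with hp | hp
    · rw [hp, zero_mul] at h
      exact absurd ((hpq k).resolve_left (not_not.2 hp)) (not_not.2 h.symm)
    · apply Finset.mem_union_right
      rw [Finset.mem_image]
      exact ⟨k, Finset.mem_univ k, by rw [div_eq_iff hp]; linear_combination -h⟩

private lemma prop_of_three (a b : Fin 4 → ℂ)
    (hβ : ∀ t, b t ≠ 0)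
    (hcross : ∀ t s : Fin 4, t ≠ s → a t * b s ≠ a s * b t)
    (p q : Fin 3 → ℂ)
    (hnz : ∀ k t, p k * a t + q k * b t ≠ 0)
    (hnd : ∀ k k' : Fin 3, k ≠ k' → p k * q k' ≠ p k' * q k)
    (W₁ W₂ : Fin 4 → ℂ) (hW₁ : W₁ ≠ 0)
    (h1 : ∀ k, ∑ t, W₁ t / (p k * a t + q k * b t) = 0)
    (h2 : ∀ k, ∑ t, W₂ t / (p k * a t + q k * b t) = 0) :
    ∃ c : ℂ, ∀ t, W₂ t = c * W₁ t := by
  have hpq : ∀ k, p k ≠ 0 ∨ q k ≠ 0 := by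
    intro k
    by_contra h
    push_neg at h
    exact hnz k 0 (by rw [h.1, h.2]; ring)
  obtain ⟨c, hc1, hc2⟩ := exists_fourth a b hβ p q hpq
  have hc1' : ∀ t, 1 * a t + c * b t ≠ 0 := fun t h => hc1 t (by linear_combination h)
  have hnz4 : ∀ s t, ![p 0, p 1, p 2, 1] s * a t + ![q 0, q 1, q 2, c] s * b t ≠ 0 := by
    intro s t
    rcases fin4cover s with rfl | rfl | rfl | rfl
    · exact hnz 0 t
    · exact hnz 1 t
    · exact hnz 2 t
    · exact hc1' t
  have hnodes4 : ∀ s s' : Fin 4, s ≠ s' →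
      ![p 0, p 1, p 2, 1] s * ![q 0, q 1, q 2, c] s'
        ≠ ![p 0, p 1, p 2, 1] s' * ![q 0, q 1, q 2, c] s := by
    intro s s' hss'
    rcases fin4cover s with rfl | rfl | rfl | rfl <;>
      rcases fin4cover s' with rfl | rfl | rfl | rfl <;>
      simp only [show ![p 0, p 1, p 2, 1] (0 : Fin 4) = p 0 from rfl,
        show ![p 0, p 1, p 2, 1] (1 : Fin 4) = p 1 from rfl,
        show ![p 0, p 1, p 2, 1] (2 : Fin 4) = p 2 from rfl,
        show ![p 0, p 1, p 2, 1] (3 : Fin 4) = 1 from rfl,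
        show ![q 0, q 1, q 2, c] (0 : Fin 4) = q 0 from rfl,
        show ![q 0, q 1, q 2, c] (1 : Fin 4) = q 1 from rfl,
        show ![q 0, q 1, q 2, c] (2 : Fin 4) = q 2 from rfl,
        show ![q 0, q 1, q 2, c] (3 : Fin 4) = c from rfl] <;>
      first
        | exact absurd rfl hss'
        | exact hnd 0 1 (by decide)
        | exact hnd 0 2 (by decide)
        | exact hnd 1 2 (by decide)
        | exact hnd 1 0 (by decide)
        | exact hnd 2 0 (by decide)
        | exact hnd 2 1 (by decide)
        | exact fun h => hc2 0 (by linear_combination h)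
        | exact fun h => hc2 1 (by linear_combination h)
        | exact fun h => hc2 2 (by linear_combination h)
        | exact fun h => hc2 0 (by linear_combination -h)
        | exact fun h => hc2 1 (by linear_combination -h)
        | exact fun h => hc2 2 (by linear_combination -h)
  by_cases hd : (∑ t, W₁ t / (1 * a t + c * b t)) = 0
  · exfalso
    apply hW₁
    apply cauchyKernel a b hcross _ _ hnz4 hnodes4
    intro s
    rcases fin4cover s with rfl | rfl | rfl | rfl
    · exact h1 0
    · exact h1 1
    · exact h1 2
    · exact hd
  · obtain ⟨d1, hd1⟩ : ∃ d, d = ∑ t, W₁ t / (1 * a t + c * b t) := ⟨_, rfl⟩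
    obtain ⟨d2, hd2⟩ : ∃ d, d = ∑ t, W₂ t / (1 * a t + c * b t) := ⟨_, rfl⟩
    rw [← hd1] at hd
    refine ⟨d2 / d1, ?_⟩
    have K : ∀ k : Fin 3, ∑ t, (W₂ t - d2 / d1 * W₁ t) / (p k * a t + q k * b t) = 0 := by
      intro k
      have e1 := h1 k
      have e2 := h2 k
      rw [Fin.sum_univ_four] at e1 e2 ⊢
      linear_combination e2 - (d2/d1) * e1
    have K3 : ∑ t, (W₂ t - d2 / d1 * W₁ t) / (1 * a t + c * b t) = 0 := by
      have e1 := hd1.symm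
      have e2 := hd2.symm
      rw [Fin.sum_univ_four] at e1 e2 ⊢
      have key : d2 - d2 / d1 * d1 = 0 := by field_simp; ring
      linear_combination e2 - (d2/d1) * e1 + key
    have hzero : (fun t => W₂ t - d2 / d1 * W₁ t) = 0 := by
      apply cauchyKernel a b hcross _ _ hnz4 hnodes4
      intro s
      rcases fin4cover s with rfl | rfl | rfl | rfl
      · exact K 0
      · exact K 1
      · exact K 2
      · exact K3
    intro t
    have := congrFun hzero t
    simp only [Pi.zero_apply] at this
    linear_combination this

private lemma kernel4 (a b : Fin 4 → ℂ)
    (hcross : ∀ t s : Fin 4, t ≠ s → a t * b s ≠ a s * b t)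
    (p0 p1 p2 p3 q0 q1 q2 q3 : ℂ)
    (hz0 : ∀ t, p0 * a t + q0 * b t ≠ 0) (hz1 : ∀ t, p1 * a t + q1 * b t ≠ 0)
    (hz2 : ∀ t, p2 * a t + q2 * b t ≠ 0) (hz3 : ∀ t, p3 * a t + q3 * b t ≠ 0)
    (h01 : p0 * q1 ≠ p1 * q0) (h02 : p0 * q2 ≠ p2 * q0) (h03 : p0 * q3 ≠ p3 * q0)
    (h12 : p1 * q2 ≠ p2 * q1) (h13 : p1 * q3 ≠ p3 * q1) (h23 : p2 * q3 ≠ p3 * q2)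
    (w : Fin 4 → ℂ)
    (hw0 : ∑ t, w t / (p0 * a t + q0 * b t) = 0)
    (hw1 : ∑ t, w t / (p1 * a t + q1 * b t) = 0)
    (hw2 : ∑ t, w t / (p2 * a t + q2 * b t) = 0)
    (hw3 : ∑ t, w t / (p3 * a t + q3 * b t) = 0) : w = 0 := by
  apply cauchyKernel a b hcross ![p0, p1, p2, p3] ![q0, q1, q2, q3]
  · intro s t
    rcases fin4cover s with rfl | rfl | rfl | rfl
    · exact hz0 t
    · exact hz1 t
    · simpa [show ![p0,p1,p2,p3] (2 : Fin 4) = p2 from rfl,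
        show ![q0,q1,q2,q3] (2 : Fin 4) = q2 from rfl] using hz2 t
    · simpa [show ![p0,p1,p2,p3] (3 : Fin 4) = p3 from rfl,
        show ![q0,q1,q2,q3] (3 : Fin 4) = q3 from rfl] using hz3 t
  · intro s s' hss'
    rcases fin4cover s with rfl | rfl | rfl | rfl <;>
      rcases fin4cover s' with rfl | rfl | rfl | rfl <;>
      simp only [show ![p0,p1,p2,p3] (0 : Fin 4) = p0 from rfl,
        show ![p0,p1,p2,p3] (1 : Fin 4) = p1 from rfl,
        show ![p0,p1,p2,p3] (2 : Fin 4) = p2 from rfl,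
        show ![p0,p1,p2,p3] (3 : Fin 4) = p3 from rfl,
        show ![q0,q1,q2,q3] (0 : Fin 4) = q0 from rfl,
        show ![q0,q1,q2,q3] (1 : Fin 4) = q1 from rfl,
        show ![q0,q1,q2,q3] (2 : Fin 4) = q2 from rfl,
        show ![q0,q1,q2,q3] (3 : Fin 4) = q3 from rfl] <;>
      first
        | exact absurd rfl hss'
        | exact h01 | exact h02 | exact h03 | exact h12 | exact h13 | exact h23
        | exact h01.symm | exact h02.symm | exact h03.symm
        | exact h12.symm | exact h13.symm | exact h23.symm
  · intro s
    rcases fin4cover s with rfl | rfl | rfl | rfl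
    · exact hw0
    · exact hw1
    · simpa [show ![p0,p1,p2,p3] (2 : Fin 4) = p2 from rfl,
        show ![q0,q1,q2,q3] (2 : Fin 4) = q2 from rfl] using hw2
    · simpa [show ![p0,p1,p2,p3] (3 : Fin 4) = p3 from rfl,
        show ![q0,q1,q2,q3] (3 : Fin 4) = q3 from rfl] using hw3

private lemma castFF {j l : ℕ} (h : j ≠ l) : (j : ℂ) * 1 ≠ (l : ℂ) * 1 := by
  intro hh
  apply h
  have : (j : ℂ) = (l : ℂ) := by linear_combination hh
  exact_mod_cast this

private lemma castGG {i k : ℕ} (h : i ≠ k) : (1 : ℂ) * (k : ℂ) ≠ 1 * (i : ℂ) := by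
  intro hh
  apply h
  have : (i : ℂ) = (k : ℂ) := by linear_combination -hh
  exact_mod_cast this

private lemma castFG {i j : ℕ} (h : i * j ≠ 1) : (j : ℂ) * (i : ℂ) ≠ 1 * 1 := by
  intro hh
  apply h
  have : ((i * j : ℕ) : ℂ) = ((1 : ℕ) : ℂ) := by push_cast; linear_combination hh
  exact_mod_cast this

private lemma castGF {i j : ℕ} (h : i * j ≠ 1) : (1 : ℂ) * 1 ≠ (j : ℂ) * (i : ℂ) :=
  (castFG h).symm

section helpers
variable (α β : Fin 4 → ℂ)

private lemma denomF (hβ : ∀ t, β t ≠ 0)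
    (hW : ∀ t, ∀ m : ℕ, 1 ≤ m → β t ≠ -(m : ℂ) * α t ∧ (m : ℂ) * β t ≠ -α t)
    (j : ℕ) (t : Fin 4) : (j : ℂ) * α t + β t ≠ 0 := by
  rcases Nat.eq_zero_or_pos j with hj | hj
  · subst hj; simpa using hβ t
  · intro h
    exact (hW t j hj).1 (by linear_combination h)

private lemma denomG (hα : ∀ t, α t ≠ 0)
    (hW : ∀ t, ∀ m : ℕ, 1 ≤ m → β t ≠ -(m : ℂ) * α t ∧ (m : ℂ) * β t ≠ -α t)
    (i : ℕ) (t : Fin 4) : α t + (i : ℂ) * β t ≠ 0 := by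
  rcases Nat.eq_zero_or_pos i with hi | hi
  · subst hi; simpa using hα t
  · intro h
    exact (hW t i hi).2 (by linear_combination h)

private lemma PQvec_ne_zero (hα : ∀ t, α t ≠ 0) (hβ : ∀ t, β t ≠ 0)
    (hW : ∀ t, ∀ m : ℕ, 1 ≤ m → β t ≠ -(m : ℂ) * α t ∧ (m : ℂ) * β t ≠ -α t)
    (i j : ℕ) (t : Fin 4) : PQvec α β i j t ≠ 0 := by
  unfold PQvec
  exact div_ne_zero (mul_ne_zero (denomG α β hα hW i t) (denomF α β hβ hW j t))
    (mul_ne_zero (hα t) (hβ t))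

private lemma one_sub_ij (i j : ℕ) (hij : i * j ≠ 1) : (1 : ℂ) - (i : ℂ) * (j : ℂ) ≠ 0 := by
  intro h
  apply hij
  have : ((i * j : ℕ) : ℂ) = ((1 : ℕ) : ℂ) := by push_cast; linear_combination -h
  exact_mod_cast this

private lemma mem_lineIJ_iff (hα : ∀ t, α t ≠ 0) (hβ : ∀ t, β t ≠ 0)
    (hW : ∀ t, ∀ m : ℕ, 1 ≤ m → β t ≠ -(m : ℂ) * α t ∧ (m : ℂ) * β t ≠ -α t)
    (i j : ℕ) (hij : i * j ≠ 1) (v : Fin 4 → ℂ) (hv : v ≠ 0) :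
    Projectivization.mk ℂ v hv ∈ lineIJ α β i j ↔
      ((∑ t, (α t * β t / ((j : ℂ) * α t + β t)) * v t) = 0 ∧
       (∑ t, (α t * β t / (α t + (i : ℂ) * β t)) * v t) = 0) := by
  have dF := denomF α β hβ hW j
  have dG := denomG α β hα hW i
  constructor
  · rintro ⟨x, ⟨hxa, hxb⟩, hne, hmk⟩
    rw [Projectivization.mk_eq_mk_iff] at hmk
    obtain ⟨c, hc⟩ := hmk
    have hvt : ∀ t, v t = (c : ℂ) * (PQvec α β i j t * x t) := by
      intro t
      have := congrFun hc t
      simpa [Units.smul_def] using this.symm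
    rw [Fin.sum_univ_four] at hxa hxb
    constructor
    · have key : ∀ t, (α t * β t / ((j : ℂ) * α t + β t)) * v t
          = (c : ℂ) * (α t * x t) + (c : ℂ) * (i : ℂ) * (β t * x t) := by
        intro t
        rw [hvt t]
        unfold PQvec
        have h1 := hα t
        have h2 := hβ t
        have h3 : α t * (j:ℂ) + β t ≠ 0 := by rw [mul_comm]; exact dF t
        have h4 : α t + β t * (i:ℂ) ≠ 0 := by rw [mul_comm]; exact dG t
        field_simp
      rw [Fin.sum_univ_four, key 0, key 1, key 2, key 3]
      linear_combination (c : ℂ) * hxa + (c : ℂ) * (i : ℂ) * hxb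
    · have key : ∀ t, (α t * β t / (α t + (i : ℂ) * β t)) * v t
          = (c : ℂ) * (j : ℂ) * (α t * x t) + (c : ℂ) * (β t * x t) := by
        intro t
        rw [hvt t]
        unfold PQvec
        have h1 := hα t
        have h2 := hβ t
        have h3 : α t * (j:ℂ) + β t ≠ 0 := by rw [mul_comm]; exact dF t
        have h4 : α t + β t * (i:ℂ) ≠ 0 := by rw [mul_comm]; exact dG t
        field_simp
      rw [Fin.sum_univ_four, key 0, key 1, key 2, key 3]
      linear_combination (c : ℂ) * (j : ℂ) * hxa + (c : ℂ) * hxb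
  · rintro ⟨hF, hG⟩
    obtain ⟨x, hxdef⟩ : ∃ x : Fin 4 → ℂ,
        x = fun t => (α t * β t * v t) / ((α t + (i : ℂ) * β t) * ((j : ℂ) * α t + β t)) :=
      ⟨_, rfl⟩
    have hveq : (fun t => PQvec α β i j t * x t) = v := by
      funext t
      rw [hxdef]
      unfold PQvec
      have := hα t
      have := hβ t
      have : α t * (j:ℂ) + β t ≠ 0 := by rw [mul_comm]; exact dF t
      have := dG t
      field_simp
    have termF : ∀ t, (α t + (i : ℂ) * β t) * x t
        = (α t * β t / ((j : ℂ) * α t + β t)) * v t := by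
      intro t
      rw [hxdef]
      have := dF t
      have := dG t
      field_simp
    have termG : ∀ t, ((j : ℂ) * α t + β t) * x t
        = (α t * β t / (α t + (i : ℂ) * β t)) * v t := by
      intro t
      rw [hxdef]
      have := dF t
      have := dG t
      field_simp
    have hA : (α 0 + (i:ℂ)*β 0) * x 0 + (α 1 + (i:ℂ)*β 1) * x 1
        + (α 2 + (i:ℂ)*β 2) * x 2 + (α 3 + (i:ℂ)*β 3) * x 3 = 0 := by
      rw [termF 0, termF 1, termF 2, termF 3]
      rw [Fin.sum_univ_four] at hF
      linear_combination hF
    have hB : ((j:ℂ)*α 0 + β 0) * x 0 + ((j:ℂ)*α 1 + β 1) * x 1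
        + ((j:ℂ)*α 2 + β 2) * x 2 + ((j:ℂ)*α 3 + β 3) * x 3 = 0 := by
      rw [termG 0, termG 1, termG 2, termG 3]
      rw [Fin.sum_univ_four] at hG
      linear_combination hG
    have h1ij := one_sub_ij i j hij
    have hxa : (∑ t, α t * x t) = 0 := by
      rw [Fin.sum_univ_four]
      apply mul_left_cancel₀ h1ij
      linear_combination hA - (i : ℂ) * hB
    have hxb : (∑ t, β t * x t) = 0 := by
      rw [Fin.sum_univ_four]
      apply mul_left_cancel₀ h1ij
      linear_combination hB - (j : ℂ) * hA
    refine ⟨x, ⟨hxa, hxb⟩, by rw [hveq]; exact hv, ?_⟩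
    exact ((Projectivization.mk_eq_mk_iff ℂ _ _ _ _).2 ⟨1, by rw [one_smul, hveq]⟩).symm

private lemma killed (hα : ∀ t, α t ≠ 0) (hβ : ∀ t, β t ≠ 0)
    (hW : ∀ t, ∀ m : ℕ, 1 ≤ m → β t ≠ -(m : ℂ) * α t ∧ (m : ℂ) * β t ≠ -α t)
    (i j : ℕ) (hij : i * j ≠ 1) (v : Fin 4 → ℂ) (hv : v ≠ 0)
    (hmem : Projectivization.mk ℂ v hv ∈ lineIJ α β i j) :
    (∑ t, (α t * β t * v t) / ((j : ℂ) * α t + 1 * β t)) = 0 ∧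
    (∑ t, (α t * β t * v t) / ((1 : ℂ) * α t + (i : ℂ) * β t)) = 0 := by
  obtain ⟨hF, hG⟩ := (mem_lineIJ_iff α β hα hβ hW i j hij v hv).mp hmem
  rw [Fin.sum_univ_four] at hF hG
  constructor
  · rw [Fin.sum_univ_four]
    linear_combination hF
  · rw [Fin.sum_univ_four]
    linear_combination hG

end helpers

/-- assuming 1 ∉ I(a) ∪ I(b), Z_{a,b}^A ⋆ L^A is a stick figure of a·b
lines in ℙ³ (pairwise distinct lines, any two meeting in at most one point, no point
on three lines) and it is the complete intersection of the surfaces ∏ F_j = 0 and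
∏ G_i = 0, where F_j cuts out the common plane of the lines with fixed j and G_i the
common plane of the lines with fixed i. -/
theorem stick_figure_complete_intersection (α β : Fin 4 → ℂ)
    (hα : ∀ t, α t ≠ 0) (hβ : ∀ t, β t ≠ 0)
    (hdist : ∀ t s : Fin 4, t ≠ s → α t * β s ≠ α s * β t)
    (hW : ∀ t, ∀ m : ℕ, 1 ≤ m → β t ≠ -(m : ℂ) * α t ∧ (m : ℂ) * β t ≠ -α t)
    (a b : ℕ) (Ia Ib : Finset ℕ) (hIa : Ia.card = a) (hIb : Ib.card = b)
    (h0a : 0 ∈ Ia) (h0b : 0 ∈ Ib) (h1a : 1 ∉ Ia) (h1b : 1 ∉ Ib) :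
    (∀ i ∈ Ia, ∀ k ∈ Ia, ∀ j ∈ Ib, ∀ l ∈ Ib, (i, j) ≠ (k, l) →
      lineIJ α β i j ≠ lineIJ α β k l) ∧
    (∀ i ∈ Ia, ∀ k ∈ Ia, ∀ j ∈ Ib, ∀ l ∈ Ib, (i, j) ≠ (k, l) →
      (lineIJ α β i j ∩ lineIJ α β k l).Subsingleton) ∧
    (∀ i₁ ∈ Ia, ∀ i₂ ∈ Ia, ∀ i₃ ∈ Ia, ∀ j₁ ∈ Ib, ∀ j₂ ∈ Ib, ∀ j₃ ∈ Ib,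
      (i₁, j₁) ≠ (i₂, j₂) → (i₁, j₁) ≠ (i₃, j₃) → (i₂, j₂) ≠ (i₃, j₃) →
      lineIJ α β i₁ j₁ ∩ lineIJ α β i₂ j₂ ∩ lineIJ α β i₃ j₃ = ∅) ∧
    (∃ F G : ℕ → (Fin 4 → ℂ),
      (∀ j ∈ Ib, F j ≠ 0) ∧ (∀ i ∈ Ia, G i ≠ 0) ∧
      (∀ i ∈ Ia, ∀ j ∈ Ib, lineIJ α β i j ⊆
        {z | ∀ (v : Fin 4 → ℂ) (hv : v ≠ 0), Projectivization.mk ℂ v hv = z →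
          ∑ t, F j t * v t = 0}) ∧
      (∀ i ∈ Ia, ∀ j ∈ Ib, lineIJ α β i j ⊆
        {z | ∀ (v : Fin 4 → ℂ) (hv : v ≠ 0), Projectivization.mk ℂ v hv = z →
          ∑ t, G i t * v t = 0}) ∧
      (⋃ i ∈ Ia, ⋃ j ∈ Ib, lineIJ α β i j) =
        {z | ∀ (v : Fin 4 → ℂ) (hv : v ≠ 0), Projectivization.mk ℂ v hv = z →
          (∏ j ∈ Ib, ∑ t, F j t * v t) = 0 ∧ (∏ i ∈ Ia, ∑ t, G i t * v t) = 0}) := by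
  classical
  have hne1a : ∀ i ∈ Ia, i ≠ 1 := fun i hi h => h1a (h ▸ hi)
  have hne1b : ∀ j ∈ Ib, j ≠ 1 := fun j hj h => h1b (h ▸ hj)
  have hijn : ∀ i ∈ Ia, ∀ j ∈ Ib, i * j ≠ 1 := by
    intro i hi j hj h
    exact hne1a i hi (Nat.dvd_one.mp ⟨j, h.symm⟩)
  have hFnz : ∀ (j : ℕ) (t : Fin 4), (j : ℂ) * α t + 1 * β t ≠ 0 :=
    fun j t h => denomF α β hβ hW j t (by linear_combination h)
  have hGnz : ∀ (i : ℕ) (t : Fin 4), (1 : ℂ) * α t + (i : ℂ) * β t ≠ 0 :=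
    fun i t h => denomG α β hα hW i t (by linear_combination h)
  -- proportionality of two vectors killed by the four functionals of two distinct lines
  have pairProp : ∀ i j k l : ℕ, i ∈ Ia → j ∈ Ib → k ∈ Ia → l ∈ Ib → (i, j) ≠ (k, l) →
      ∀ W₁ W₂ : Fin 4 → ℂ, W₁ ≠ 0 →
      (∑ t, W₁ t / ((j:ℂ) * α t + 1 * β t)) = 0 →
      (∑ t, W₁ t / ((1:ℂ) * α t + (i:ℂ) * β t)) = 0 →
      (∑ t, W₁ t / ((l:ℂ) * α t + 1 * β t)) = 0 →
      (∑ t, W₁ t / ((1:ℂ) * α t + (k:ℂ) * β t)) = 0 →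
      (∑ t, W₂ t / ((j:ℂ) * α t + 1 * β t)) = 0 →
      (∑ t, W₂ t / ((1:ℂ) * α t + (i:ℂ) * β t)) = 0 →
      (∑ t, W₂ t / ((l:ℂ) * α t + 1 * β t)) = 0 →
      (∑ t, W₂ t / ((1:ℂ) * α t + (k:ℂ) * β t)) = 0 →
      ∃ c : ℂ, ∀ t, W₂ t = c * W₁ t := by
    intro i j k l hi hj hk hl hne W₁ W₂ hW₁ a1 a2 a3 a4 b1 b2 b3 b4
    by_cases hjl : j = l
    · subst hjl
      have hik : i ≠ k := fun h => hne (by rw [h])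
      apply prop_of_three α β hβ hdist ![1, 1, (j:ℂ)] ![(i:ℂ), (k:ℂ), 1] ?_ ?_ W₁ W₂ hW₁ ?_ ?_
      · intro m t
        rcases fin3cover m with rfl | rfl | rfl
        · exact hGnz i t
        · exact hGnz k t
        · simpa [show ![(1:ℂ), 1, (j:ℂ)] (2 : Fin 3) = (j:ℂ) from rfl,
            show ![(i:ℂ), (k:ℂ), 1] (2 : Fin 3) = 1 from rfl] using hFnz j t
      · intro m m' hmm'
        rcases fin3cover m with rfl | rfl | rfl <;>
          rcases fin3cover m' with rfl | rfl | rfl <;>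
          simp only [show ![(1:ℂ), 1, (j:ℂ)] (0 : Fin 3) = 1 from rfl,
            show ![(1:ℂ), 1, (j:ℂ)] (1 : Fin 3) = 1 from rfl,
            show ![(1:ℂ), 1, (j:ℂ)] (2 : Fin 3) = (j:ℂ) from rfl,
            show ![(i:ℂ), (k:ℂ), 1] (0 : Fin 3) = (i:ℂ) from rfl,
            show ![(i:ℂ), (k:ℂ), 1] (1 : Fin 3) = (k:ℂ) from rfl,
            show ![(i:ℂ), (k:ℂ), 1] (2 : Fin 3) = 1 from rfl] <;>
          first
            | exact absurd rfl hmm'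
            | exact castGG hik
            | exact (castGG hik).symm
            | exact castGF (hijn i hi j hj)
            | exact (castGF (hijn i hi j hj)).symm
            | exact castGF (hijn k hk j hj)
            | exact (castGF (hijn k hk j hj)).symm
      · intro m
        rcases fin3cover m with rfl | rfl | rfl
        · exact a2
        · exact a4
        · simpa [show ![(1:ℂ), 1, (j:ℂ)] (2 : Fin 3) = (j:ℂ) from rfl,
            show ![(i:ℂ), (k:ℂ), 1] (2 : Fin 3) = 1 from rfl] using a1
      · intro m
        rcases fin3cover m with rfl | rfl | rfl
        · exact b2
        · exact b4
        · simpa [show ![(1:ℂ), 1, (j:ℂ)] (2 : Fin 3) = (j:ℂ) from rfl,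
            show ![(i:ℂ), (k:ℂ), 1] (2 : Fin 3) = 1 from rfl] using b1
    · apply prop_of_three α β hβ hdist ![(j:ℂ), (l:ℂ), 1] ![1, 1, (i:ℂ)] ?_ ?_ W₁ W₂ hW₁ ?_ ?_
      · intro m t
        rcases fin3cover m with rfl | rfl | rfl
        · exact hFnz j t
        · exact hFnz l t
        · simpa [show ![(j:ℂ), (l:ℂ), 1] (2 : Fin 3) = 1 from rfl,
            show ![(1:ℂ), 1, (i:ℂ)] (2 : Fin 3) = (i:ℂ) from rfl] using hGnz i t
      · intro m m' hmm'
        rcases fin3cover m with rfl | rfl | rfl <;>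
          rcases fin3cover m' with rfl | rfl | rfl <;>
          simp only [show ![(j:ℂ), (l:ℂ), 1] (0 : Fin 3) = (j:ℂ) from rfl,
            show ![(j:ℂ), (l:ℂ), 1] (1 : Fin 3) = (l:ℂ) from rfl,
            show ![(j:ℂ), (l:ℂ), 1] (2 : Fin 3) = 1 from rfl,
            show ![(1:ℂ), 1, (i:ℂ)] (0 : Fin 3) = 1 from rfl,
            show ![(1:ℂ), 1, (i:ℂ)] (1 : Fin 3) = 1 from rfl,
            show ![(1:ℂ), 1, (i:ℂ)] (2 : Fin 3) = (i:ℂ) from rfl] <;>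
          first
            | exact absurd rfl hmm'
            | exact castFF hjl
            | exact (castFF hjl).symm
            | exact castFG (hijn i hi j hj)
            | exact (castFG (hijn i hi j hj)).symm
            | exact castFG (hijn i hi l hl)
            | exact (castFG (hijn i hi l hl)).symm
      · intro m
        rcases fin3cover m with rfl | rfl | rfl
        · exact a1
        · exact a3
        · simpa [show ![(j:ℂ), (l:ℂ), 1] (2 : Fin 3) = 1 from rfl,
            show ![(1:ℂ), 1, (i:ℂ)] (2 : Fin 3) = (i:ℂ) from rfl] using a2
      · intro m
        rcases fin3cover m with rfl | rfl | rfl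
        · exact b1
        · exact b3
        · simpa [show ![(j:ℂ), (l:ℂ), 1] (2 : Fin 3) = 1 from rfl,
            show ![(1:ℂ), 1, (i:ℂ)] (2 : Fin 3) = (i:ℂ) from rfl] using b2
  -- nonvanishing of the scaled vector
  have Wne : ∀ v : Fin 4 → ℂ, v ≠ 0 → (fun t => α t * β t * v t) ≠ 0 := by
    intro v hv h
    apply hv
    funext t
    have h' := congrFun h t
    simp only [Pi.zero_apply] at h' ⊢
    have := mul_ne_zero (hα t) (hβ t)
    rcases mul_eq_zero.mp h' with h'' | h''
    · exact absurd h'' this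
    · exact h''
  -- CLAIM 1 : lines pairwise distinct
  have claim1 : ∀ i ∈ Ia, ∀ k ∈ Ia, ∀ j ∈ Ib, ∀ l ∈ Ib, (i, j) ≠ (k, l) →
      lineIJ α β i j ≠ lineIJ α β k l := by
    intro i hi k hk j hj l hl hne heq
    obtain ⟨xu, hxu0, hxu1, hxu2, hxu3⟩ : ∃ x : Fin 4 → ℂ,
        x 0 = α 1 * β 2 - α 2 * β 1 ∧ x 1 = α 2 * β 0 - α 0 * β 2 ∧
        x 2 = α 0 * β 1 - α 1 * β 0 ∧ x 3 = 0 :=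
      ⟨![α 1 * β 2 - α 2 * β 1, α 2 * β 0 - α 0 * β 2, α 0 * β 1 - α 1 * β 0, 0],
        rfl, rfl, rfl, rfl⟩
    obtain ⟨xw, hxw0, hxw1, hxw2, hxw3⟩ : ∃ x : Fin 4 → ℂ,
        x 0 = 0 ∧ x 1 = α 2 * β 3 - α 3 * β 2 ∧
        x 2 = α 3 * β 1 - α 1 * β 3 ∧ x 3 = α 1 * β 2 - α 2 * β 1 :=
      ⟨![0, α 2 * β 3 - α 3 * β 2, α 3 * β 1 - α 1 * β 3, α 1 * β 2 - α 2 * β 1],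
        rfl, rfl, rfl, rfl⟩
    have hxuL : xu ∈ LAset α β := by
      constructor
      · rw [Fin.sum_univ_four, hxu0, hxu1, hxu2, hxu3]; ring
      · rw [Fin.sum_univ_four, hxu0, hxu1, hxu2, hxu3]; ring
    have hxwL : xw ∈ LAset α β := by
      constructor
      · rw [Fin.sum_univ_four, hxw0, hxw1, hxw2, hxw3]; ring
      · rw [Fin.sum_univ_four, hxw0, hxw1, hxw2, hxw3]; ring
    have h12 : α 1 * β 2 - α 2 * β 1 ≠ 0 := sub_ne_zero.2 (hdist 1 2 (by decide))
    have hPQ := PQvec_ne_zero α β hα hβ hW i j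
    have hvu : (fun t => PQvec α β i j t * xu t) ≠ 0 := by
      intro h
      have := congrFun h 0
      simp only [Pi.zero_apply] at this
      exact (mul_ne_zero (hPQ 0) (hxu0 ▸ h12)) this
    have hvw : (fun t => PQvec α β i j t * xw t) ≠ 0 := by
      intro h
      have := congrFun h 3
      simp only [Pi.zero_apply] at this
      exact (mul_ne_zero (hPQ 3) (hxw3 ▸ h12)) this
    have hzu1 : Projectivization.mk ℂ _ hvu ∈ lineIJ α β i j := ⟨xu, hxuL, hvu, rfl⟩
    have hzw1 : Projectivization.mk ℂ _ hvw ∈ lineIJ α β i j := ⟨xw, hxwL, hvw, rfl⟩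
    have hzu2 : Projectivization.mk ℂ _ hvu ∈ lineIJ α β k l := heq ▸ hzu1
    have hzw2 : Projectivization.mk ℂ _ hvw ∈ lineIJ α β k l := heq ▸ hzw1
    obtain ⟨ku1, ku2⟩ := killed α β hα hβ hW i j (hijn i hi j hj) _ hvu hzu1
    obtain ⟨ku3, ku4⟩ := killed α β hα hβ hW k l (hijn k hk l hl) _ hvu hzu2
    obtain ⟨kw1, kw2⟩ := killed α β hα hβ hW i j (hijn i hi j hj) _ hvw hzw1
    obtain ⟨kw3, kw4⟩ := killed α β hα hβ hW k l (hijn k hk l hl) _ hvw hzw2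
    have hWu : (fun t => α t * β t * (PQvec α β i j t * xu t)) ≠ 0 := by
      intro h
      have := congrFun h 0
      simp only [Pi.zero_apply] at this
      exact (mul_ne_zero (mul_ne_zero (hα 0) (hβ 0))
        (mul_ne_zero (hPQ 0) (hxu0 ▸ h12))) this
    obtain ⟨c, hc⟩ := pairProp i j k l hi hj hk hl hne _ _ hWu ku1 ku2 ku3 ku4 kw1 kw2 kw3 kw4
    have e3 := hc 3
    rw [hxu3, hxw3] at e3
    have : α 3 * β 3 * (PQvec α β i j 3 * (α 1 * β 2 - α 2 * β 1)) = 0 := by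
      rw [e3]; ring
    exact (mul_ne_zero (mul_ne_zero (hα 3) (hβ 3)) (mul_ne_zero (hPQ 3) h12)) this
  refine ⟨claim1, ?_, ?_, ?_⟩
  -- CLAIM 2 : pairwise intersections are subsingletons
  · intro i hi k hk j hj l hl hne z₁ hz₁ z₂ hz₂
    obtain ⟨hz₁a, hz₁b⟩ := hz₁
    obtain ⟨hz₂a, hz₂b⟩ := hz₂
    have m₁a : Projectivization.mk ℂ z₁.rep z₁.rep_nonzero ∈ lineIJ α β i j := by
      rw [Projectivization.mk_rep]; exact hz₁a
    have m₁b : Projectivization.mk ℂ z₁.rep z₁.rep_nonzero ∈ lineIJ α β k l := by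
      rw [Projectivization.mk_rep]; exact hz₁b
    have m₂a : Projectivization.mk ℂ z₂.rep z₂.rep_nonzero ∈ lineIJ α β i j := by
      rw [Projectivization.mk_rep]; exact hz₂a
    have m₂b : Projectivization.mk ℂ z₂.rep z₂.rep_nonzero ∈ lineIJ α β k l := by
      rw [Projectivization.mk_rep]; exact hz₂b
    obtain ⟨k1, k2⟩ := killed α β hα hβ hW i j (hijn i hi j hj) _ z₁.rep_nonzero m₁a
    obtain ⟨k3, k4⟩ := killed α β hα hβ hW k l (hijn k hk l hl) _ z₁.rep_nonzero m₁b
    obtain ⟨k5, k6⟩ := killed α β hα hβ hW i j (hijn i hi j hj) _ z₂.rep_nonzero m₂a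
    obtain ⟨k7, k8⟩ := killed α β hα hβ hW k l (hijn k hk l hl) _ z₂.rep_nonzero m₂b
    obtain ⟨c, hc⟩ := pairProp i j k l hi hj hk hl hne _ _
      (Wne z₁.rep z₁.rep_nonzero) k1 k2 k3 k4 k5 k6 k7 k8
    have hrep : ∀ t, z₂.rep t = c * z₁.rep t := by
      intro t
      have := hc t
      exact mul_left_cancel₀ (mul_ne_zero (hα t) (hβ t)) (by linear_combination this)
    have : Projectivization.mk ℂ z₂.rep z₂.rep_nonzero
        = Projectivization.mk ℂ z₁.rep z₁.rep_nonzero := by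
      rw [Projectivization.mk_eq_mk_iff']
      exact ⟨c, funext fun t => by simp [hrep t]⟩
    rw [Projectivization.mk_rep, Projectivization.mk_rep] at this
    exact this.symm
  -- CLAIM 3 : no point on three distinct lines
  · intro i₁ hi₁ i₂ hi₂ i₃ hi₃ j₁ hj₁ j₂ hj₂ j₃ hj₃ hne12 hne13 hne23
    rw [Set.eq_empty_iff_forall_notMem]
    rintro z ⟨⟨hza, hzb⟩, hzc⟩
    have mke : ∀ (i j : ℕ), i ∈ Ia → j ∈ Ib → z ∈ lineIJ α β i j →
        (∑ t, (α t * β t * z.rep t) / ((j:ℂ) * α t + 1 * β t)) = 0 ∧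
        (∑ t, (α t * β t * z.rep t) / ((1:ℂ) * α t + (i:ℂ) * β t)) = 0 := by
      intro i j hi hj hz
      apply killed α β hα hβ hW i j (hijn i hi j hj) z.rep z.rep_nonzero
      rw [Projectivization.mk_rep]; exact hz
    obtain ⟨F1, G1⟩ := mke i₁ j₁ hi₁ hj₁ hza
    obtain ⟨F2, G2⟩ := mke i₂ j₂ hi₂ hj₂ hzb
    obtain ⟨F3, G3⟩ := mke i₃ j₃ hi₃ hj₃ hzc
    have hWz := Wne z.rep z.rep_nonzero
    apply hWz
    -- pick four projectively distinct functionals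
    by_cases e12i : i₁ = i₂
    · have hj12 : j₁ ≠ j₂ := fun h => hne12 (by rw [e12i, h])
      by_cases e13i : i₁ = i₃
      · have hj13 : j₁ ≠ j₃ := fun h => hne13 (by rw [e13i, h])
        have hj23 : j₂ ≠ j₃ := fun h => hne23 (by rw [← e12i, e13i, h])
        exact kernel4 α β hdist (j₁:ℂ) (j₂:ℂ) (j₃:ℂ) 1 1 1 1 (i₁:ℂ)
          (hFnz j₁) (hFnz j₂) (hFnz j₃) (hGnz i₁)
          (castFF hj12) (castFF hj13) (castFG (hijn i₁ hi₁ j₁ hj₁))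
          (castFF hj23) (castFG (hijn i₁ hi₁ j₂ hj₂)) (castFG (hijn i₁ hi₁ j₃ hj₃))
          _ F1 F2 F3 G1
      · exact kernel4 α β hdist 1 1 (j₁:ℂ) (j₂:ℂ) (i₁:ℂ) (i₃:ℂ) 1 1
          (hGnz i₁) (hGnz i₃) (hFnz j₁) (hFnz j₂)
          (castGG e13i) (castGF (hijn i₁ hi₁ j₁ hj₁))
          (castGF (hijn i₁ hi₁ j₂ hj₂)) (castGF (hijn i₃ hi₃ j₁ hj₁))
          (castGF (hijn i₃ hi₃ j₂ hj₂)) (castFF hj12)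
          _ G1 G3 F1 F2
    · by_cases e12j : j₁ = j₂
      · by_cases e13j : j₁ = j₃
        · have hi13 : i₁ ≠ i₃ := fun h => hne13 (by rw [e13j, h])
          have hi23 : i₂ ≠ i₃ := fun h => hne23 (by rw [← e12j, e13j, h])
          exact kernel4 α β hdist 1 1 1 (j₁:ℂ) (i₁:ℂ) (i₂:ℂ) (i₃:ℂ) 1
            (hGnz i₁) (hGnz i₂) (hGnz i₃) (hFnz j₁)
            (castGG e12i) (castGG hi13)
            (castGF (hijn i₁ hi₁ j₁ hj₁)) (castGG hi23)
            (castGF (hijn i₂ hi₂ j₁ hj₁)) (castGF (hijn i₃ hi₃ j₁ hj₁))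
            _ G1 G2 G3 F1
        · exact kernel4 α β hdist (j₁:ℂ) (j₃:ℂ) 1 1 1 1 (i₁:ℂ) (i₂:ℂ)
            (hFnz j₁) (hFnz j₃) (hGnz i₁) (hGnz i₂)
            (castFF e13j) (castFG (hijn i₁ hi₁ j₁ hj₁)) (castFG (hijn i₂ hi₂ j₁ hj₁))
            (castFG (hijn i₁ hi₁ j₃ hj₃)) (castFG (hijn i₂ hi₂ j₃ hj₃))
            (castGG e12i)
            _ F1 F3 G1 G2
      · exact kernel4 α β hdist (j₁:ℂ) (j₂:ℂ) 1 1 1 1 (i₁:ℂ) (i₂:ℂ)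
          (hFnz j₁) (hFnz j₂) (hGnz i₁) (hGnz i₂)
          (castFF e12j) (castFG (hijn i₁ hi₁ j₁ hj₁)) (castFG (hijn i₂ hi₂ j₁ hj₁))
          (castFG (hijn i₁ hi₁ j₂ hj₂)) (castFG (hijn i₂ hi₂ j₂ hj₂))
          (castGG e12i)
          _ F1 F2 G1 G2
  -- COMPLETE INTERSECTION
  · refine ⟨fun j t => α t * β t / ((j : ℂ) * α t + β t),
      fun i t => α t * β t / (α t + (i : ℂ) * β t), ?_, ?_, ?_, ?_, ?_⟩
    · intro j _ h
      have := congrFun h 0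
      simp only [Pi.zero_apply] at this
      exact div_ne_zero (mul_ne_zero (hα 0) (hβ 0)) (denomF α β hβ hW j 0) this
    · intro i _ h
      have := congrFun h 0
      simp only [Pi.zero_apply] at this
      exact div_ne_zero (mul_ne_zero (hα 0) (hβ 0)) (denomG α β hα hW i 0) this
    · intro i hi j hj z hz v hv hmk
      have : Projectivization.mk ℂ v hv ∈ lineIJ α β i j := hmk ▸ hz
      exact ((mem_lineIJ_iff α β hα hβ hW i j (hijn i hi j hj) v hv).mp this).1
    · intro i hi j hj z hz v hv hmk
      have : Projectivization.mk ℂ v hv ∈ lineIJ α β i j := hmk ▸ hz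
      exact ((mem_lineIJ_iff α β hα hβ hW i j (hijn i hi j hj) v hv).mp this).2
    · ext z
      constructor
      · intro hz
        simp only [Set.mem_iUnion] at hz
        obtain ⟨i, hi, j, hj, hz⟩ := hz
        intro v hv hmk
        have hm : Projectivization.mk ℂ v hv ∈ lineIJ α β i j := hmk ▸ hz
        obtain ⟨hF, hG⟩ := (mem_lineIJ_iff α β hα hβ hW i j (hijn i hi j hj) v hv).mp hm
        exact ⟨Finset.prod_eq_zero hj hF, Finset.prod_eq_zero hi hG⟩
      · intro hz
        obtain ⟨hF, hG⟩ := hz z.rep z.rep_nonzero (Projectivization.mk_rep z)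
        obtain ⟨j, hj, hFj⟩ := Finset.prod_eq_zero_iff.mp hF
        obtain ⟨i, hi, hGi⟩ := Finset.prod_eq_zero_iff.mp hG
        simp only [Set.mem_iUnion]
        refine ⟨i, hi, j, hj, ?_⟩
        rw [← Projectivization.mk_rep z]
        exact (mem_lineIJ_iff α β hα hβ hW i j (hijn i hi j hj)
          z.rep z.rep_nonzero).mpr ⟨hFj, hGi⟩
end
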